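/- arXiv:2603.18932 — 4 statements merged into one kernel-verified Lean document; each statement's English description precedes it below -/
import Mathlib

section
/- Let p be an odd prime and n ≥ 2. There is a bijection between the set of stable admissible words of length n and the set of sequences (a_1, ..., a_k) of positive integers with k ≥ 0 (the empty sequence allowed) such that: each a_i is congruent to 0 or 1 modulo 2p−2; a_1 ≥ 4(p−1); a_{i+1} ≥ p·a_i for 1 ≤ i ≤ k−1; and p·a_k < (p−1)·(n + 1 + a_1 + ... + a_k) when k ≥ 1. Moreover, under this bijection the word corresponding to (a_1, ..., a_k) has degree n + 1 + a_1 + ... + a_k. -/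
/-!
Statement 1: for an odd prime `p` and `n ≥ 2`, stable admissible words (on the degree-2
generator `μ`) of length `n` are in bijection with the admissible sequences
`(a_1, …, a_k)` below, the word corresponding to `(a_1, …, a_k)` having degree
`n + 1 + a_1 + ⋯ + a_k`.
-/

/-- The alphabet `{x, σ, ρ^k, φ^k}` (the generator symbol is called `mu` here; for
Statement 0 it plays the role of `x`). -/
inductive Letter : Type
  | mu : Letter
  | sigma : Letter
  | rho : ℕ → Letter
  | phi : ℕ → Letter
  deriving DecidableEq

open Letter

/-- `allowedPair l r` holds when the letter `l` may appear immediately to the left of the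
letter `r` in an admissible word. -/
def allowedPair : Letter → Letter → Prop
  | l, mu => l = sigma
  | l, sigma => ∃ k, l = rho k
  | l, rho _ => l = sigma ∨ ∃ j, l = phi j
  | l, phi _ => l = sigma ∨ ∃ j, l = phi j

/-- An admissible word: a nonempty string (read left to right) whose rightmost letter is
the generator, and in which every pair of adjacent letters is allowed.  (These conditions
force the generator to occur only as the rightmost letter.) -/
def IsAdmissible (w : List Letter) : Prop :=
  w ≠ [] ∧ w.getLast? = some mu ∧ w.Chain' allowedPair

/-- A word is stable if its leftmost letter is the generator, `σ`, `ρ⁰` or `φ⁰`. -/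
def IsStable (w : List Letter) : Prop :=
  w.head? = some mu ∨ w.head? = some sigma ∨
    w.head? = some (rho 0) ∨ w.head? = some (phi 0)

/-- The degree of a word, defined recursively from the right; the generator has degree
`g`:  `deg(x) = g`, `deg(σw) = 1 + deg w`, `deg(ρᵏw) = pᵏ(1 + deg w)`,
`deg(φᵏw) = pᵏ(2 + p · deg w)`. -/
def degW (p g : ℕ) : List Letter → ℕ
  | [] => 0
  | mu :: _ => g
  | sigma :: w => 1 + degW p g w
  | rho k :: w => p ^ k * (1 + degW p g w)
  | phi k :: w => p ^ k * (2 + p * degW p g w)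


namespace S1
open Letter

/-- The "scaling" elements emitted by an exponent `k`, from base degree `d`. -/
def scals (p d : ℕ) : ℕ → List ℕ
  | 0 => []
  | k+1 => (p-1)*d :: scals p (p*d) k

/-- The sequence associated to a word, reading the word from the right. -/
def enc (p : ℕ) : List Letter → List ℕ
  | [] => []
  | mu :: _ => []
  | sigma :: w => enc p w
  | rho k :: w => enc p w ++ scals p (1 + degW p 2 w) k
  | phi k :: w => enc p w ++ ((1 + (p-1) * degW p 2 w) :: scals p (2 + p * degW p 2 w) k)

lemma scals_concat (p : ℕ) : ∀ k d, scals p d (k+1) = scals p d k ++ [(p-1) * (p^k * d)] := by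
  intro k
  induction k with
  | zero => intro d; simp [scals]
  | succ k ih =>
      intro d
      show (p-1)*d :: scals p (p*d) (k+1) = ((p-1)*d :: scals p (p*d) k) ++ _
      rw [ih (p*d)]
      simp only [List.cons_append, List.append_assoc]
      congr 3
      ring

lemma scals_sum (p : ℕ) (hp : 1 ≤ p) (d : ℕ) : ∀ k, (scals p d k).sum = (p^k - 1) * d := by
  intro k
  induction k generalizing d with
  | zero => simp [scals]
  | succ k ih =>
      show (p-1)*d + (scals p (p*d) k).sum = _
      rw [ih (p*d)]
      have h1 : d ≤ p*d := Nat.le_mul_of_pos_left d (by omega)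
      have h2 : p*d ≤ p^k*(p*d) := Nat.le_mul_of_pos_left _ (Nat.pow_pos (by omega))
      have h3 : p^k*(p*d) = p^(k+1)*d := by ring
      have h4 : 1 ≤ p^k := Nat.one_le_pow _ _ (by omega)
      have h5 : 1 ≤ p^(k+1) := Nat.one_le_pow _ _ (by omega)
      rw [Nat.sub_mul, Nat.sub_mul, Nat.sub_mul]
      omega

lemma scals_pos {p : ℕ} (hp : 3 ≤ p) : ∀ k d, 0 < d → ∀ x ∈ scals p d k, 0 < x := by
  intro k
  induction k with
  | zero => intro d _ x hx; simp [scals] at hx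
  | succ k ih =>
      intro d hd x hx
      simp only [scals, List.mem_cons] at hx
      rcases hx with rfl | h
      · have : 0 < (p-1) := by omega
        positivity
      · exact ih (p*d) (by positivity) x h

lemma scals_mod {p : ℕ} (hp : 3 ≤ p) : ∀ k d, Even d → ∀ x ∈ scals p d k, x % (2*(p-1)) = 0 := by
  intro k
  induction k with
  | zero => intro d _ x hx; simp [scals] at hx
  | succ k ih =>
      intro d hd x hx
      simp only [scals, List.mem_cons] at hx
      rcases hx with rfl | h
      · obtain ⟨e, he⟩ := hd
        have : (p-1)*d = (2*(p-1))*e := by rw [he]; ring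
        simp [this, Nat.mul_mod_right]
      · exact ih (p*d) (hd.mul_left p) x h

lemma scals_even {p : ℕ} (hp : 3 ≤ p) (hodd : Odd p) : ∀ k d, ∀ x ∈ scals p d k, Even x := by
  intro k
  induction k with
  | zero => intro d x hx; simp [scals] at hx
  | succ k ih =>
      intro d x hx
      simp only [scals, List.mem_cons] at hx
      rcases hx with rfl | h
      · have : Even (p-1) := by
          obtain ⟨m, hm⟩ := hodd
          exact ⟨m, by omega⟩
        exact this.mul_right d
      · exact ih (p*d) x h

lemma getLast?_cons_ne {α : Type*} {l : List α} (h : l ≠ []) (a : α) :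
    (a :: l).getLast? = l.getLast? := by
  rcases l with _ | ⟨b, t⟩
  · exact absurd rfl h
  · exact List.getLast?_cons_cons ..

lemma scals_chain {p : ℕ} : ∀ k d, (scals p d k).Chain' (fun x y => p*x ≤ y) := by
  intro k
  induction k with
  | zero => intro d; simp [scals, List.Chain']
  | succ k ih =>
      intro d
      show List.Chain' _ ((p-1)*d :: scals p (p*d) k)
      rw [List.Chain', List.isChain_cons]
      refine ⟨?_, ih (p*d)⟩
      intro y hy
      cases k with
      | zero => simp [scals] at hy
      | succ k =>
          simp only [scals, List.head?_cons, Option.mem_def, Option.some.injEq] at hy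
          subst hy
          calc p * ((p-1)*d) = (p-1)*(p*d) := by ring
          _ ≤ (p-1)*(p*d) := le_rfl

lemma scals_getLast (p : ℕ) (k d : ℕ) :
    (scals p d (k+1)).getLast? = some ((p-1) * (p^k * d)) := by
  rw [scals_concat]
  simp

-- admissibility inversion lemmas
lemma adm_mu {w : List Letter} (h : IsAdmissible (mu :: w)) : w = [] := by
  rcases w with _ | ⟨l, t⟩
  · rfl
  · exfalso
    have hc := h.2.2
    rw [List.Chain', List.isChain_cons_cons] at hc
    have := hc.1
    cases l <;> simp [allowedPair] at this

lemma adm_tail_ne {l : Letter} {w : List Letter} (h : IsAdmissible (l :: w)) (hl : l ≠ mu) :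
    w ≠ [] := by
  rintro rfl
  exact hl (by simpa using h.2.1)

lemma adm_tail {l : Letter} {w : List Letter} (h : IsAdmissible (l :: w)) (hw : w ≠ []) :
    IsAdmissible w := by
  refine ⟨hw, ?_, (List.isChain_cons.1 h.2.2).2⟩
  have := h.2.1
  rwa [getLast?_cons_ne hw] at this

lemma adm_head_pair {l : Letter} {w : List Letter} (h : IsAdmissible (l :: w)) :
    ∀ x, w.head? = some x → allowedPair l x := by
  intro x hx
  exact (List.isChain_cons.1 h.2.2).1 x hx

lemma head_of_rho {k : ℕ} {w : List Letter} (h : IsAdmissible (rho k :: w)) :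
    w.head? = some sigma := by
  have hne : w ≠ [] := adm_tail_ne h (by simp)
  rcases w with _ | ⟨x, t⟩
  · exact absurd rfl hne
  · have := adm_head_pair h x rfl
    cases x <;> simp [allowedPair] at this <;> simp

lemma head_of_phi {k : ℕ} {w : List Letter} (h : IsAdmissible (phi k :: w)) :
    (∃ m, w.head? = some (rho m)) ∨ (∃ m, w.head? = some (phi m)) := by
  have hne : w ≠ [] := adm_tail_ne h (by simp)
  rcases w with _ | ⟨x, t⟩
  · exact absurd rfl hne
  · have := adm_head_pair h x rfl
    cases x <;> simp [allowedPair] at this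
    · left; exact ⟨_, rfl⟩
    · right; exact ⟨_, rfl⟩

lemma head_of_sigma {w : List Letter} (h : IsAdmissible (sigma :: w)) :
    w.head? = some mu ∨ (∃ m, w.head? = some (rho m)) ∨ (∃ m, w.head? = some (phi m)) := by
  have hne : w ≠ [] := adm_tail_ne h (by simp)
  rcases w with _ | ⟨x, t⟩
  · exact absurd rfl hne
  · have := adm_head_pair h x rfl
    cases x <;> simp [allowedPair] at this
    · left; rfl
    · right; left; exact ⟨_, rfl⟩
    · right; right; exact ⟨_, rfl⟩

lemma adm_singleton {l : Letter} (h : IsAdmissible [l]) : l = mu := by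
  simpa using h.2.1

lemma adm_of_length_one {w : List Letter} (h : IsAdmissible w) (hl : w.length = 1) :
    w = [mu] := by
  rcases w with _ | ⟨x, _ | _⟩ <;> simp_all
  have := adm_singleton h
  simp [this]

lemma adm_rho_exp {j k : ℕ} {w : List Letter} (h : IsAdmissible (rho k :: w)) :
    IsAdmissible (rho j :: w) := by
  have hne : w ≠ [] := adm_tail_ne h (by simp)
  have ht := adm_tail h hne
  refine ⟨by simp, ?_, ?_⟩
  · rw [getLast?_cons_ne hne]
    have := h.2.1
    rwa [getLast?_cons_ne hne] at this
  · rw [List.Chain', List.isChain_cons]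
    refine ⟨?_, ht.2.2⟩
    intro y hy
    rw [head_of_rho h] at hy
    cases hy
    exact ⟨j, rfl⟩

lemma adm_phi_exp {j k : ℕ} {w : List Letter} (h : IsAdmissible (phi k :: w)) :
    IsAdmissible (phi j :: w) := by
  have hne : w ≠ [] := adm_tail_ne h (by simp)
  have ht := adm_tail h hne
  refine ⟨by simp, ?_, ?_⟩
  · rw [getLast?_cons_ne hne]
    have := h.2.1
    rwa [getLast?_cons_ne hne] at this
  · rw [List.Chain', List.isChain_cons]
    refine ⟨?_, ht.2.2⟩
    intro y hy
    rcases head_of_phi h with ⟨m, hm⟩ | ⟨m, hm⟩ <;> rw [hm] at hy <;> cases hy <;>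
      exact Or.inr ⟨j, rfl⟩

end S1

namespace S1
open Letter

lemma even_pm1 {p : ℕ} (hodd : Odd p) : Even (p-1) := by
  obtain ⟨m, hm⟩ := hodd; exact ⟨m, by omega⟩

lemma arith_rho (p L S k d : ℕ) (hp : 1 ≤ p) (hd : d = L + 1 + S) :
    p^k * (1 + d) = L + 1 + 1 + (S + (p^k - 1)*(1+d)) := by
  have h1 : (p^k - 1)*(1+d) = p^k*(1+d) - (1+d) := by rw [Nat.sub_mul]; simp
  have h4 : (1+d) ≤ p^k * (1+d) := Nat.le_mul_of_pos_left _ (Nat.one_le_pow _ _ (by omega))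
  rw [h1]
  generalize hB : p^k * (1 + d) = B at *
  omega

lemma arith_phi (p L S k d : ℕ) (hp : 1 ≤ p) (hd : d = L + 1 + S) :
    p^k * (2 + p*d) = L + 1 + 1 + (S + ((1 + (p-1)*d) + (p^k - 1)*(2 + p*d))) := by
  have h2 : (p-1)*d = p*d - d := by rw [Nat.sub_mul]; simp
  have h3 : d ≤ p*d := Nat.le_mul_of_pos_left _ (by omega)
  have h1 : (p^k - 1)*(2+p*d) = p^k*(2+p*d) - (2+p*d) := by rw [Nat.sub_mul]; simp
  have h4 : (2+p*d) ≤ p^k * (2+p*d) := Nat.le_mul_of_pos_left _ (Nat.one_le_pow _ _ (by omega))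
  rw [h2, h1]
  generalize hA : p * d = A at *
  generalize hB : p^k * (2 + A) = B at *
  omega

/-- Master structural lemma about `enc` on admissible words. -/
theorem master {p : ℕ} (hp : 3 ≤ p) (hodd : Odd p) :
    ∀ w, IsAdmissible w →
    (degW p 2 w = w.length + 1 + (enc p w).sum) ∧
    (2 ≤ degW p 2 w) ∧
    ((∃ k, w.head? = some (rho k) ∨ w.head? = some (phi k)) →
        Even (degW p 2 w) ∧ 4 ≤ degW p 2 w) ∧
    (w.head? = some sigma → ¬ Even (degW p 2 w) ∧ 3 ≤ degW p 2 w) ∧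
    (w.head? = some mu → degW p 2 w = 2) ∧
    (∀ x ∈ enc p w, 0 < x ∧ (x % (2*(p-1)) = 0 ∨ x % (2*(p-1)) = 1)) ∧
    (∀ h, (enc p w).head? = some h → 4*(p-1) ≤ h) ∧
    ((enc p w).Chain' (fun x y => p*x ≤ y)) ∧
    (∀ l, (enc p w).getLast? = some l →
        p*l ≤ (p-1) * degW p 2 w ∧ (IsStable w → p*l + 1 ≤ (p-1) * degW p 2 w)) := by
  intro w
  induction w with
  | nil => intro h; exact absurd rfl h.1
  | cons l w ih =>
    intro h
    cases l with
    | mu =>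
        have hw : w = [] := adm_mu h
        subst hw
        refine ⟨by simp [degW, enc], by simp [degW], by simp, by simp, by simp [degW],
          by simp [enc], by simp [enc], by simp [enc, List.Chain'], by simp [enc]⟩
    | sigma =>
        have hne : w ≠ [] := adm_tail_ne h (by simp)
        obtain ⟨IH1, IH2, IH3, IH4, IH5, IH6, IH7, IH8, IH9⟩ := ih (adm_tail h hne)
        have hdeg : degW p 2 (sigma :: w) = 1 + degW p 2 w := by simp [degW]
        have henc : enc p (sigma :: w) = enc p w := by simp [enc]
        have heven : Even (degW p 2 w) := by
          rcases head_of_sigma h with hm | ⟨m, hm⟩ | ⟨m, hm⟩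
          · rw [IH5 hm]; exact ⟨1, rfl⟩
          · exact (IH3 ⟨m, Or.inl hm⟩).1
          · exact (IH3 ⟨m, Or.inr hm⟩).1
        refine ⟨?_, ?_, ?_, ?_, ?_, ?_, ?_, ?_, ?_⟩
        · rw [hdeg, henc]; simp only [List.length_cons]; omega
        · omega
        · rintro ⟨k, hk | hk⟩ <;> simp at hk
        · intro _
          constructor
          · rw [hdeg]
            simp [Nat.even_add_one, Nat.even_add, heven]
          · omega
        · intro hcon; simp at hcon
        · rw [henc]; exact IH6
        · rw [henc]; exact IH7
        · rw [henc]; exact IH8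
        · rw [henc, hdeg]
          intro l hl
          have hW := (IH9 l hl).1
          have hmul : (p-1) * (1 + degW p 2 w) = (p-1) + (p-1) * degW p 2 w := by ring
          constructor
          · omega
          · intro _; omega
    | rho k =>
        have hne : w ≠ [] := adm_tail_ne h (by simp)
        obtain ⟨IH1, IH2, IH3, IH4, IH5, IH6, IH7, IH8, IH9⟩ := ih (adm_tail h hne)
        obtain ⟨hodd', hd3⟩ := IH4 (head_of_rho h)
        set d := degW p 2 w with hd
        set E := 1 + d with hE
        have hEeven : Even E := by
          have : Even (d+1) := by rw [Nat.even_add_one]; exact hodd'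
          rw [hE, add_comm]
          exact this
        have hE4 : 4 ≤ E := by omega
        have hdeg : degW p 2 (rho k :: w) = p^k * E := by simp [degW, hE, hd]
        have henc : enc p (rho k :: w) = enc p w ++ scals p E k := by simp [enc, hE, hd]
        have hPk : 1 ≤ p^k := Nat.one_le_pow _ _ (by omega)
        have hEPk : E ≤ p^k * E := Nat.le_mul_of_pos_left _ hPk
        refine ⟨?_, by omega, ?_, ?_, ?_, ?_, ?_, ?_, ?_⟩
        · rw [hdeg, henc]
          simp only [List.length_cons, List.sum_append]
          rw [scals_sum p (by omega) E k, hE]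
          exact arith_rho p w.length (enc p w).sum k d (by omega) IH1
        · intro _
          exact ⟨hEeven.mul_left _, by omega⟩
        · intro hcon; simp at hcon
        · intro hcon; simp at hcon
        · rw [henc]
          intro x hx
          rcases List.mem_append.1 hx with hx | hx
          · exact IH6 x hx
          · exact ⟨scals_pos hp k E (by omega) x hx, Or.inl (scals_mod hp k E hEeven x hx)⟩
        · rw [henc]
          intro x hx
          rcases hEnc : enc p w with _ | ⟨a, t⟩
          · rw [hEnc] at hx
            cases k with
            | zero => simp [scals] at hx
            | succ k =>
                simp only [List.nil_append, scals, List.head?_cons, Option.some.injEq] at hx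
                subst hx
                calc 4*(p-1) = (p-1)*4 := by ring
                _ ≤ (p-1)*E := Nat.mul_le_mul_left _ hE4
          · rw [hEnc] at hx
            simp only [List.cons_append, List.head?_cons, Option.some.injEq] at hx
            subst hx
            exact IH7 a (by rw [hEnc]; rfl)
        · rw [henc]
          rw [List.Chain', List.isChain_append]
          refine ⟨IH8, scals_chain k E, ?_⟩
          intro x hx y hy
          have hW := (IH9 x hx).1
          cases k with
          | zero => simp [scals] at hy
          | succ k =>
              simp only [scals, List.head?_cons, Option.mem_def, Option.some.injEq] at hy
              subst hy
              calc p * x ≤ (p-1) * d := hW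
              _ ≤ (p-1) * E := Nat.mul_le_mul_left _ (by omega)
        · rw [henc, hdeg]
          cases k with
          | zero =>
              simp only [scals, List.append_nil, pow_zero, one_mul]
              intro l hl
              have hW := (IH9 l hl).1
              have hmul : (p-1) * E = (p-1) + (p-1) * d := by rw [hE]; ring
              exact ⟨by omega, fun _ => by omega⟩
          | succ k =>
              intro l hl
              rw [List.getLast?_append_of_ne_nil _ (by simp [scals]), scals_getLast] at hl
              cases hl
              constructor
              · calc p * ((p-1) * (p^k * E)) = (p-1) * (p^(k+1) * E) := by ring
                _ ≤ (p-1) * (p^(k+1) * E) := le_rfl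
              · intro hst
                exfalso
                simp [IsStable] at hst
    | phi k =>
        have hne : w ≠ [] := adm_tail_ne h (by simp)
        obtain ⟨IH1, IH2, IH3, IH4, IH5, IH6, IH7, IH8, IH9⟩ := ih (adm_tail h hne)
        have hIH3 : Even (degW p 2 w) ∧ 4 ≤ degW p 2 w := by
          rcases head_of_phi h with ⟨m, hm⟩ | ⟨m, hm⟩
          · exact IH3 ⟨m, Or.inl hm⟩
          · exact IH3 ⟨m, Or.inr hm⟩
        obtain ⟨hdeven, hd4⟩ := hIH3
        set d := degW p 2 w with hd
        set F := 1 + (p-1) * d with hF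
        set E := 2 + p * d with hE
        have hEeven : Even E := by
          rw [hE]
          exact (Even.add ⟨1, rfl⟩ (hdeven.mul_left p))
        have hE4 : 4 ≤ E := by
          have h : 4 ≤ p * d := by
            have h0 := Nat.mul_le_mul (show 1 ≤ p by omega) hd4
            simpa using h0
          rw [hE]; omega
        have hdeg : degW p 2 (phi k :: w) = p^k * E := by simp [degW, hE, hd]
        have henc : enc p (phi k :: w) = enc p w ++ (F :: scals p E k) := by
          simp [enc, hE, hd, hF]
        have hPk : 1 ≤ p^k := Nat.one_le_pow _ _ (by omega)
        have hEPk : E ≤ p^k * E := Nat.le_mul_of_pos_left _ hPk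
        have hFE : p * F + 1 ≤ (p-1) * E := by
          have h1 : (p-1) * E = (p-1) * 2 + (p-1) * (p * d) := by rw [hE]; ring
          have h2 : p * F = p + (p-1) * (p * d) := by rw [hF]; ring
          omega
        refine ⟨?_, by omega, ?_, ?_, ?_, ?_, ?_, ?_, ?_⟩
        · rw [hdeg, henc]
          simp only [List.length_cons, List.sum_append, List.sum_cons]
          rw [scals_sum p (by omega) E k, hE, hF]
          exact arith_phi p w.length (enc p w).sum k d (by omega) IH1
        · intro _
          exact ⟨hEeven.mul_left _, by omega⟩
        · intro hcon; simp at hcon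
        · intro hcon; simp at hcon
        · rw [henc]
          intro x hx
          rcases List.mem_append.1 hx with hx | hx
          · exact IH6 x hx
          · rcases List.mem_cons.1 hx with rfl | hx
            · refine ⟨by omega, Or.inr ?_⟩
              obtain ⟨e, he⟩ := hdeven
              have : F = 1 + (2*(p-1))*e := by rw [hF, he]; ring
              rw [this, Nat.add_mul_mod_self_left]
              exact Nat.mod_eq_of_lt (by omega)
            · exact ⟨scals_pos hp k E (by omega) x hx, Or.inl (scals_mod hp k E hEeven x hx)⟩
        · rw [henc]
          intro x hx
          rcases hEnc : enc p w with _ | ⟨a, t⟩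
          · rw [hEnc] at hx
            simp only [List.nil_append, List.head?_cons, Option.some.injEq] at hx
            subst hx
            have h4 : (p-1)*4 ≤ (p-1)*d := Nat.mul_le_mul_left _ hd4
            have h5 : 4*(p-1) = (p-1)*4 := by ring
            omega
          · rw [hEnc] at hx
            simp only [List.cons_append, List.head?_cons, Option.some.injEq] at hx
            subst hx
            exact IH7 a (by rw [hEnc]; rfl)
        · rw [henc]
          rw [List.Chain', List.isChain_append]
          refine ⟨IH8, ?_, ?_⟩
          · rw [List.isChain_cons]
            refine ⟨?_, scals_chain k E⟩
            intro y hy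
            cases k with
            | zero => simp [scals] at hy
            | succ k =>
                simp only [scals, List.head?_cons, Option.mem_def, Option.some.injEq] at hy
                subst hy
                omega
          · intro x hx y hy
            simp only [List.head?_cons, Option.mem_def, Option.some.injEq] at hy
            subst hy
            have hW := (IH9 x hx).1
            calc p * x ≤ (p-1) * d := hW
            _ ≤ F := by omega
        · rw [henc, hdeg]
          intro l hl
          rw [List.getLast?_append_of_ne_nil _ (by simp)] at hl
          cases k with
          | zero =>
              simp only [scals, List.getLast?_singleton, Option.some.injEq] at hl
              subst hl
              simp only [pow_zero, one_mul]
              exact ⟨by omega, fun _ => hFE⟩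
          | succ k =>
              rw [show F :: scals p E (k+1) = (F :: scals p E k) ++ [(p-1)*(p^k*E)] by
                    rw [scals_concat]; rfl] at hl
              rw [List.getLast?_append_of_ne_nil _ (by simp)] at hl
              simp only [List.getLast?_singleton, Option.some.injEq] at hl
              subst hl
              constructor
              · calc p * ((p-1) * (p^k * E)) = (p-1) * (p^(k+1) * E) := by ring
                _ ≤ (p-1) * (p^(k+1) * E) := le_rfl
              · intro hst
                exfalso
                simp [IsStable] at hst

end S1
namespace S1
open Letter

/-- If an admissible word of length ≥ 2 has even degree, it starts with `ρ` or `φ`. -/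
lemma headRP {p : ℕ} (hp : 3 ≤ p) (hodd : Odd p) {w : List Letter} (h : IsAdmissible w)
    (hl : 2 ≤ w.length) (he : Even (degW p 2 w)) :
    (∃ k w', w = rho k :: w') ∨ (∃ k w', w = phi k :: w') := by
  rcases w with _ | ⟨l, t⟩
  · simp at hl
  cases l with
  | mu => have := adm_mu h; subst this; simp at hl
  | sigma =>
      exfalso
      have := (master hp hodd _ h).2.2.2.1 (by simp)
      exact this.1 he
  | rho k => exact Or.inl ⟨k, t, rfl⟩
  | phi k => exact Or.inr ⟨k, t, rfl⟩

/-- Prepend one padding letter (`σ` or `ρ⁰`). -/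
def step (w : List Letter) : List Letter :=
  if w.head? = some sigma then rho 0 :: w else sigma :: w

def pad : ℕ → List Letter → List Letter
  | 0, w => w
  | t+1, w => step (pad t w)

lemma step_adm {w : List Letter} (h : IsAdmissible w) : IsAdmissible (step w) := by
  rcases w with _ | ⟨l, t⟩
  · exact absurd rfl h.1
  unfold step
  split
  case isTrue hh =>
      refine ⟨by simp, ?_, ?_⟩
      · rw [getLast?_cons_ne (by simp)]; exact h.2.1
      · rw [List.Chain', List.isChain_cons]
        refine ⟨?_, h.2.2⟩
        intro y hy
        simp only [List.head?_cons, Option.mem_def, Option.some.injEq] at hy hh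
        subst hy; subst hh
        exact ⟨0, rfl⟩
  case isFalse hh =>
      refine ⟨by simp, ?_, ?_⟩
      · rw [getLast?_cons_ne (by simp)]; exact h.2.1
      · rw [List.Chain', List.isChain_cons]
        refine ⟨?_, h.2.2⟩
        intro y hy
        simp only [List.head?_cons, Option.mem_def, Option.some.injEq] at hy hh
        subst hy
        cases l with
        | mu => exact rfl
        | sigma => exact absurd rfl hh
        | rho k => exact Or.inl rfl
        | phi k => exact Or.inl rfl

lemma step_deg {p : ℕ} (w : List Letter) : degW p 2 (step w) = 1 + degW p 2 w := by
  unfold step; split <;> simp [degW]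

lemma step_enc {p : ℕ} (w : List Letter) : enc p (step w) = enc p w := by
  unfold step; split <;> simp [enc, scals]

lemma step_len (w : List Letter) : (step w).length = w.length + 1 := by
  unfold step; split <;> simp

lemma step_stable (w : List Letter) : IsStable (step w) := by
  unfold step; split
  · right; right; left; simp
  · right; left; simp

lemma pad_adm {w : List Letter} (h : IsAdmissible w) (t : ℕ) : IsAdmissible (pad t w) := by
  induction t with
  | zero => exact h
  | succ t ih => exact step_adm ih

lemma pad_deg {p : ℕ} (w : List Letter) (t : ℕ) : degW p 2 (pad t w) = t + degW p 2 w := by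
  induction t with
  | zero => simp [pad]
  | succ t ih => show degW p 2 (step _) = _; rw [step_deg, ih]; omega

lemma pad_enc {p : ℕ} (w : List Letter) (t : ℕ) : enc p (pad t w) = enc p w := by
  induction t with
  | zero => rfl
  | succ t ih => show enc p (step _) = _; rw [step_enc, ih]

lemma pad_len (w : List Letter) (t : ℕ) : (pad t w).length = w.length + t := by
  induction t with
  | zero => rfl
  | succ t ih => show (step _).length = _; rw [step_len, ih]; omega

lemma pad_stable (w : List Letter) (t : ℕ) (ht : 1 ≤ t) : IsStable (pad t w) := by
  cases t with
  | zero => omega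
  | succ t => exact step_stable _

-- increment-of-exponent lemmas
lemma deg_rho_succ {p : ℕ} (k : ℕ) (w : List Letter) :
    degW p 2 (rho (k+1) :: w) = p * degW p 2 (rho k :: w) := by
  simp only [degW, pow_succ]; ring

lemma deg_phi_succ {p : ℕ} (k : ℕ) (w : List Letter) :
    degW p 2 (phi (k+1) :: w) = p * degW p 2 (phi k :: w) := by
  simp only [degW, pow_succ]; ring

lemma enc_rho_succ {p : ℕ} (k : ℕ) (w : List Letter) :
    enc p (rho (k+1) :: w) = enc p (rho k :: w) ++ [(p-1) * degW p 2 (rho k :: w)] := by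
  simp only [enc, degW]
  rw [scals_concat, ← List.append_assoc]

lemma enc_phi_succ {p : ℕ} (k : ℕ) (w : List Letter) :
    enc p (phi (k+1) :: w) = enc p (phi k :: w) ++ [(p-1) * degW p 2 (phi k :: w)] := by
  simp only [enc, degW]
  rw [scals_concat]
  simp [List.append_assoc]

/-- For a `p`-geometric chain, `(p-1) * sum + head ≤ p * last`. -/
lemma chain_sum {p : ℕ} (hp : 3 ≤ p) :
    ∀ a : List ℕ, a.Chain' (fun x y => p*x ≤ y) →
      ∀ x l, a.head? = some x → a.getLast? = some l → (p-1) * a.sum + x ≤ p * l := by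
  intro a
  induction a with
  | nil => intro _ x l hx; simp at hx
  | cons y t ih =>
      intro hc x l hx hl
      simp only [List.head?_cons, Option.some.injEq] at hx
      subst hx
      rcases t with _ | ⟨z, t'⟩
      · simp only [List.getLast?_singleton, Option.some.injEq] at hl
        subst hl
        have h2 : (p-1) * y + y = p * y := by
          have h1 : p - 1 + 1 = p := by omega
          calc (p-1) * y + y = ((p-1)+1) * y := by ring
          _ = p * y := by rw [h1]
        simp only [List.sum_cons, List.sum_nil, Nat.add_zero]
        omega
      · rw [List.Chain', List.isChain_cons_cons] at hc
        have hxy : p * y ≤ z := hc.1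
        have hIH := ih hc.2 z l rfl (by rw [← hl]; exact (List.getLast?_cons_cons ..).symm)
        have h1 : (p-1) * (y :: z :: t').sum = (p-1) * y + (p-1) * (z :: t').sum := by
          simp [List.sum_cons]; ring
        have h2 : (p-1) * y + y = p * y := by
          have h0 : p - 1 + 1 = p := by omega
          calc (p-1) * y + y = ((p-1)+1) * y := by ring
          _ = p * y := by rw [h0]
        omega

end S1
namespace S1
open Letter

lemma enc_rho_zero {p : ℕ} (t : List Letter) : enc p (rho 0 :: t) = enc p t := by
  simp [enc, scals]

lemma deg_rho_zero {p : ℕ} (t : List Letter) : degW p 2 (rho 0 :: t) = 1 + degW p 2 t := by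
  simp [degW]

lemma enc_phi_zero {p : ℕ} (t : List Letter) :
    enc p (phi 0 :: t) = enc p t ++ [1 + (p-1) * degW p 2 t] := by
  simp [enc, scals]

lemma deg_phi_zero {p : ℕ} (t : List Letter) :
    degW p 2 (phi 0 :: t) = 2 + p * degW p 2 t := by
  simp [degW]

/-- The last element of the code of a `ρ^{k+1}`- or `φ^j`-headed word is too big to be the
last element of the code of a `ρ⁰`- or `σ`-headed word of one larger degree. -/
lemma helperB {p : ℕ} (hp : 3 ≤ p) (hodd : Odd p) {t₁ w₂ : List Letter}
    (h₁ : IsAdmissible t₁) (h₂ : IsAdmissible w₂)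
    (hhead : (∃ k t₂, w₂ = rho (k+1) :: t₂) ∨ (∃ j t₂, w₂ = phi j :: t₂))
    (hdeg : 1 + degW p 2 t₁ = degW p 2 w₂) (henc : enc p t₁ = enc p w₂) : False := by
  have hweak := (master hp hodd t₁ h₁).2.2.2.2.2.2.2.2
  rcases hhead with ⟨k, t₂, rfl⟩ | ⟨j, t₂, rfl⟩
  · -- w₂ = rho (k+1) :: t₂
    set D' := degW p 2 (rho k :: t₂) with hD'
    have hencc : enc p (rho (k+1) :: t₂) = enc p (rho k :: t₂) ++ [(p-1) * D'] :=
      enc_rho_succ k t₂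
    have hlast : (enc p t₁).getLast? = some ((p-1) * D') := by
      rw [henc, hencc, List.getLast?_append_of_ne_nil _ (by simp)]
      simp
    have hb := (hweak _ hlast).1
    have hdd : degW p 2 (rho (k+1) :: t₂) = p * D' := deg_rho_succ k t₂
    rw [hdd] at hdeg
    -- p * ((p-1) * D') = (p-1) * (p * D')
    have h1 : p * ((p-1) * D') = (p-1) * (p * D') := by ring
    have h2 : (p-1) * (p * D') = (p-1) * (1 + degW p 2 t₁) := by rw [hdeg]
    have h3 : (p-1) * (1 + degW p 2 t₁) = (p-1) + (p-1) * degW p 2 t₁ := by ring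
    omega
  · -- w₂ = phi j :: t₂
    cases j with
    | zero =>
        set e := degW p 2 t₂ with he
        have hencc := enc_phi_zero (p := p) t₂
        have hlast : (enc p t₁).getLast? = some (1 + (p-1) * e) := by
          rw [henc, hencc, List.getLast?_append_of_ne_nil _ (by simp)]
          simp [he]
        have hb := (hweak _ hlast).1
        have hdd : degW p 2 (phi 0 :: t₂) = 2 + p * e := deg_phi_zero t₂
        rw [hdd] at hdeg
        have h1 : p * (1 + (p-1) * e) = p + (p-1) * (p * e) := by ring
        have h2 : (p-1) * degW p 2 t₁ = (p-1) * (1 + p * e) := by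
          congr 1
          omega
        have h3 : (p-1) * (1 + p * e) = (p-1) + (p-1) * (p * e) := by ring
        omega
    | succ j =>
        set D' := degW p 2 (phi j :: t₂) with hD'
        have hencc : enc p (phi (j+1) :: t₂) = enc p (phi j :: t₂) ++ [(p-1) * D'] :=
          enc_phi_succ j t₂
        have hlast : (enc p t₁).getLast? = some ((p-1) * D') := by
          rw [henc, hencc, List.getLast?_append_of_ne_nil _ (by simp)]
          simp
        have hb := (hweak _ hlast).1
        have hdd : degW p 2 (phi (j+1) :: t₂) = p * D' := deg_phi_succ j t₂
        rw [hdd] at hdeg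
        have h1 : p * ((p-1) * D') = (p-1) * (p * D') := by ring
        have h2 : (p-1) * (p * D') = (p-1) * (1 + degW p 2 t₁) := by rw [hdeg]
        have h3 : (p-1) * (1 + degW p 2 t₁) = (p-1) + (p-1) * degW p 2 t₁ := by ring
        omega

/-- Parity clash: a word headed by `ρ^{k+1}` or `φ^{k+1}` has an even last code element,
one headed by `φ⁰` an odd one. -/
lemma helperC {p : ℕ} (hp : 3 ≤ p) (hodd : Odd p) {w₁ t₂ : List Letter}
    (hhead : (∃ k t₁, w₁ = rho (k+1) :: t₁) ∨ (∃ k t₁, w₁ = phi (k+1) :: t₁))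
    (henc : enc p w₁ = enc p (phi 0 :: t₂)) : False := by
  have hodd' : Odd (1 + (p-1) * degW p 2 t₂) := by
    have : Even ((p-1) * degW p 2 t₂) := (even_pm1 hodd).mul_right _
    rcases this with ⟨m, hm⟩
    exact ⟨m, by omega⟩
  have hlast₂ : (enc p (phi 0 :: t₂)).getLast? = some (1 + (p-1) * degW p 2 t₂) := by
    rw [enc_phi_zero, List.getLast?_append_of_ne_nil _ (by simp)]
    simp
  rcases hhead with ⟨k, t₁, rfl⟩ | ⟨k, t₁, rfl⟩
  · have hlast₁ : (enc p (rho (k+1) :: t₁)).getLast? =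
        some ((p-1) * degW p 2 (rho k :: t₁)) := by
      rw [enc_rho_succ, List.getLast?_append_of_ne_nil _ (by simp)]
      simp
    rw [henc, hlast₂] at hlast₁
    have heq := Option.some.inj hlast₁
    have heven : Even ((p-1) * degW p 2 (rho k :: t₁)) := (even_pm1 hodd).mul_right _
    rw [heq] at hodd'
    exact (Nat.not_even_iff_odd.2 hodd') heven
  · have hlast₁ : (enc p (phi (k+1) :: t₁)).getLast? =
        some ((p-1) * degW p 2 (phi k :: t₁)) := by
      rw [enc_phi_succ, List.getLast?_append_of_ne_nil _ (by simp)]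
      simp
    rw [henc, hlast₂] at hlast₁
    have heq := Option.some.inj hlast₁
    have heven : Even ((p-1) * degW p 2 (phi k :: t₁)) := (even_pm1 hodd).mul_right _
    rw [heq] at hodd'
    exact (Nat.not_even_iff_odd.2 hodd') heven

/-- `enc` together with the length determines an admissible word. -/
lemma enc_inj {p : ℕ} (hp : 3 ≤ p) (hodd : Odd p) :
    ∀ D w₁ w₂, IsAdmissible w₁ → IsAdmissible w₂ → degW p 2 w₁ = D → degW p 2 w₂ = D →
      w₁.length = w₂.length → enc p w₁ = enc p w₂ → w₁ = w₂ := by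
  intro D
  induction D using Nat.strong_induction_on with
  | _ D IH =>
  intro w₁ w₂ h₁ h₂ hd₁ hd₂ hlen henc
  rcases w₁ with _ | ⟨l₁, t₁⟩
  · exact absurd rfl h₁.1
  rcases w₂ with _ | ⟨l₂, t₂⟩
  · exact absurd rfl h₂.1
  -- exclude mu heads unless length 1
  by_cases hone : t₁ = []
  · subst hone
    have e₁ : l₁ = mu := adm_singleton h₁
    have hlen2 : (l₂ :: t₂).length = 1 := by simpa using hlen.symm
    have e₂ := adm_of_length_one h₂ hlen2
    rw [e₂, e₁]
  have hone₂ : t₂ ≠ [] := by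
    intro hc; subst hc
    have : (l₁ :: t₁).length = 1 := by simpa using hlen
    exact hone (by rcases t₁ with _|_ <;> simp_all)
  have hlm₁ : l₁ ≠ mu := fun hc => hone (by subst hc; exact adm_mu h₁)
  have hlm₂ : l₂ ≠ mu := fun hc => hone₂ (by subst hc; exact adm_mu h₂)
  have hD2 : 2 ≤ D := hd₁ ▸ (master hp hodd _ h₁).2.1
  -- parity facts
  have hpar₁ := (master hp hodd _ h₁).2.2.1
  have hpar₂ := (master hp hodd _ h₂).2.2.1
  have hsig₁ := (master hp hodd _ h₁).2.2.2.1
  have hsig₂ := (master hp hodd _ h₂).2.2.2.1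
  cases l₁ with
  | mu => exact absurd rfl hlm₁
  | sigma =>
      cases l₂ with
      | mu => exact absurd rfl hlm₂
      | sigma =>
          have ht₁ := adm_tail h₁ hone
          have ht₂ := adm_tail h₂ hone₂
          have hdt₁ : degW p 2 t₁ = D - 1 := by
            have : degW p 2 (sigma :: t₁) = 1 + degW p 2 t₁ := by simp [degW]
            omega
          have hdt₂ : degW p 2 t₂ = D - 1 := by
            have : degW p 2 (sigma :: t₂) = 1 + degW p 2 t₂ := by simp [degW]
            omega
          have := IH (D-1) (by omega) t₁ t₂ ht₁ ht₂ hdt₁ hdt₂ (by simpa using hlen)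
            (by simpa [enc] using henc)
          rw [this]
      | rho k =>
          exfalso
          have hodd₁ := (hsig₁ (by simp)).1
          have heven₂ := (hpar₂ ⟨k, Or.inl (by simp)⟩).1
          rw [hd₁] at hodd₁; rw [hd₂] at heven₂
          exact hodd₁ heven₂
      | phi k =>
          exfalso
          have hodd₁ := (hsig₁ (by simp)).1
          have heven₂ := (hpar₂ ⟨k, Or.inr (by simp)⟩).1
          rw [hd₁] at hodd₁; rw [hd₂] at heven₂
          exact hodd₁ heven₂
  | rho k =>
      cases l₂ with
      | mu => exact absurd rfl hlm₂
      | sigma =>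
          exfalso
          have hodd₂ := (hsig₂ (by simp)).1
          have heven₁ := (hpar₁ ⟨k, Or.inl (by simp)⟩).1
          rw [hd₁] at heven₁; rw [hd₂] at hodd₂
          exact hodd₂ heven₁
      | rho j =>
          cases k with
          | zero =>
              cases j with
              | zero =>
                  have ht₁ := adm_tail h₁ hone
                  have ht₂ := adm_tail h₂ hone₂
                  have hdt₁ : degW p 2 t₁ = D - 1 := by
                    have := deg_rho_zero (p := p) t₁; omega
                  have hdt₂ : degW p 2 t₂ = D - 1 := by
                    have := deg_rho_zero (p := p) t₂; omega
                  have := IH (D-1) (by omega) t₁ t₂ ht₁ ht₂ hdt₁ hdt₂ (by simpa using hlen)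
                    (by rw [← enc_rho_zero (p := p) t₁, ← enc_rho_zero (p := p) t₂]; exact henc)
                  rw [this]
              | succ j =>
                  exfalso
                  exact helperB hp hodd (adm_tail h₁ hone) h₂ (Or.inl ⟨j, t₂, rfl⟩)
                    (by have := deg_rho_zero (p := p) t₁; omega)
                    (by rw [← enc_rho_zero (p := p) t₁]; exact henc)
          | succ k =>
              cases j with
              | zero =>
                  exfalso
                  exact helperB hp hodd (adm_tail h₂ hone₂) h₁ (Or.inl ⟨k, t₁, rfl⟩)
                    (by have := deg_rho_zero (p := p) t₂; omega)
                    (by rw [← enc_rho_zero (p := p) t₂]; exact henc.symm)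
              | succ j =>
                  -- strip one exponent from both
                  have hadm₁ : IsAdmissible (rho k :: t₁) := adm_rho_exp h₁
                  have hadm₂ : IsAdmissible (rho j :: t₂) := adm_rho_exp h₂
                  have hdd₁ : D = p * degW p 2 (rho k :: t₁) := by
                    rw [← hd₁]; exact deg_rho_succ k t₁
                  have hdd₂ : D = p * degW p 2 (rho j :: t₂) := by
                    rw [← hd₂]; exact deg_rho_succ j t₂
                  have hDeq : degW p 2 (rho k :: t₁) = degW p 2 (rho j :: t₂) :=
                    Nat.eq_of_mul_eq_mul_left (show 0 < p by omega) (by omega)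
                  have hD'2 : 2 ≤ degW p 2 (rho k :: t₁) := (master hp hodd _ hadm₁).2.1
                  have hlt : degW p 2 (rho k :: t₁) < D := by
                    have h3 : 3 * degW p 2 (rho k :: t₁) ≤ p * degW p 2 (rho k :: t₁) :=
                      Nat.mul_le_mul_right _ hp
                    omega
                  have henc' : enc p (rho k :: t₁) = enc p (rho j :: t₂) := by
                    have e1 := enc_rho_succ (p := p) k t₁
                    have e2 := enc_rho_succ (p := p) j t₂
                    rw [e1, e2] at henc
                    exact (List.append_inj' henc (by simp)).1
                  have := IH _ hlt (rho k :: t₁) (rho j :: t₂) hadm₁ hadm₂ rfl hDeq.symm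
                    (by simpa using hlen) henc'
                  simp only [List.cons.injEq, rho.injEq] at this
                  simp [this.1, this.2]
      | phi j =>
              cases k with
              | zero =>
                  exfalso
                  exact helperB hp hodd (adm_tail h₁ hone) h₂ (Or.inr ⟨j, t₂, rfl⟩)
                    (by have := deg_rho_zero (p := p) t₁; omega)
                    (by rw [← enc_rho_zero (p := p) t₁]; exact henc)
              | succ k =>
                  cases j with
                  | zero =>
                      exfalso
                      exact helperC hp hodd (Or.inl ⟨k, t₁, rfl⟩) henc
                  | succ j =>
                      exfalso
                      have hadm₁ : IsAdmissible (rho k :: t₁) := adm_rho_exp h₁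
                      have hadm₂ : IsAdmissible (phi j :: t₂) := adm_phi_exp h₂
                      have hdd₁ : D = p * degW p 2 (rho k :: t₁) := by
                        rw [← hd₁]; exact deg_rho_succ k t₁
                      have hdd₂ : D = p * degW p 2 (phi j :: t₂) := by
                        rw [← hd₂]; exact deg_phi_succ j t₂
                      have hDeq : degW p 2 (rho k :: t₁) = degW p 2 (phi j :: t₂) :=
                        Nat.eq_of_mul_eq_mul_left (show 0 < p by omega) (by omega)
                      have hD'2 : 2 ≤ degW p 2 (rho k :: t₁) := (master hp hodd _ hadm₁).2.1
                      have hlt : degW p 2 (rho k :: t₁) < D := by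
                        have h3 : 3 * degW p 2 (rho k :: t₁) ≤ p * degW p 2 (rho k :: t₁) :=
                          Nat.mul_le_mul_right _ hp
                        omega
                      have henc' : enc p (rho k :: t₁) = enc p (phi j :: t₂) := by
                        have e1 := enc_rho_succ (p := p) k t₁
                        have e2 := enc_phi_succ (p := p) j t₂
                        rw [e1, e2] at henc
                        exact (List.append_inj' henc (by simp)).1
                      have := IH _ hlt (rho k :: t₁) (phi j :: t₂) hadm₁ hadm₂ rfl hDeq.symm
                        (by simpa using hlen) henc'
                      simp at this
  | phi k =>
      cases l₂ with
      | mu => exact absurd rfl hlm₂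
      | sigma =>
          exfalso
          have hodd₂ := (hsig₂ (by simp)).1
          have heven₁ := (hpar₁ ⟨k, Or.inr (by simp)⟩).1
          rw [hd₁] at heven₁; rw [hd₂] at hodd₂
          exact hodd₂ heven₁
      | rho j =>
          cases j with
          | zero =>
              exfalso
              exact helperB hp hodd (adm_tail h₂ hone₂) h₁ (Or.inr ⟨k, t₁, rfl⟩)
                (by have := deg_rho_zero (p := p) t₂; omega)
                (by rw [← enc_rho_zero (p := p) t₂]; exact henc.symm)
          | succ j =>
              cases k with
              | zero =>
                  exfalso
                  exact helperC hp hodd (Or.inl ⟨j, t₂, rfl⟩) henc.symm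
              | succ k =>
                  exfalso
                  have hadm₁ : IsAdmissible (phi k :: t₁) := adm_phi_exp h₁
                  have hadm₂ : IsAdmissible (rho j :: t₂) := adm_rho_exp h₂
                  have hdd₁ : D = p * degW p 2 (phi k :: t₁) := by
                    rw [← hd₁]; exact deg_phi_succ k t₁
                  have hdd₂ : D = p * degW p 2 (rho j :: t₂) := by
                    rw [← hd₂]; exact deg_rho_succ j t₂
                  have hDeq : degW p 2 (phi k :: t₁) = degW p 2 (rho j :: t₂) :=
                    Nat.eq_of_mul_eq_mul_left (show 0 < p by omega) (by omega)
                  have hD'2 : 2 ≤ degW p 2 (phi k :: t₁) := (master hp hodd _ hadm₁).2.1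
                  have hlt : degW p 2 (phi k :: t₁) < D := by
                    have h3 : 3 * degW p 2 (phi k :: t₁) ≤ p * degW p 2 (phi k :: t₁) :=
                      Nat.mul_le_mul_right _ hp
                    omega
                  have henc' : enc p (phi k :: t₁) = enc p (rho j :: t₂) := by
                    have e1 := enc_phi_succ (p := p) k t₁
                    have e2 := enc_rho_succ (p := p) j t₂
                    rw [e1, e2] at henc
                    exact (List.append_inj' henc (by simp)).1
                  have := IH _ hlt (phi k :: t₁) (rho j :: t₂) hadm₁ hadm₂ rfl hDeq.symm
                    (by simpa using hlen) henc'
                  simp at this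
      | phi j =>
          cases k with
          | zero =>
              cases j with
              | zero =>
                  have ht₁ := adm_tail h₁ hone
                  have ht₂ := adm_tail h₂ hone₂
                  have e₁ := enc_phi_zero (p := p) t₁
                  have e₂ := enc_phi_zero (p := p) t₂
                  have hd₁' := deg_phi_zero (p := p) t₁
                  have hd₂' := deg_phi_zero (p := p) t₂
                  have hDeq : degW p 2 t₁ = degW p 2 t₂ := by
                    have h : p * degW p 2 t₁ = p * degW p 2 t₂ := by omega
                    exact Nat.eq_of_mul_eq_mul_left (show 0 < p by omega) h
                  have hD'2 : 2 ≤ degW p 2 t₁ := (master hp hodd _ ht₁).2.1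
                  have hlt : degW p 2 t₁ < D := by
                    have h3 : 3 * degW p 2 t₁ ≤ p * degW p 2 t₁ :=
                      Nat.mul_le_mul_right _ hp
                    omega
                  have henc' : enc p t₁ = enc p t₂ := by
                    rw [e₁, e₂] at henc
                    exact (List.append_inj' henc (by simp)).1
                  have := IH _ hlt t₁ t₂ ht₁ ht₂ rfl hDeq.symm (by simpa using hlen) henc'
                  rw [this]
              | succ j =>
                  exfalso
                  exact helperC hp hodd (Or.inr ⟨j, t₂, rfl⟩) henc.symm
          | succ k =>
              cases j with
              | zero =>
                  exfalso
                  exact helperC hp hodd (Or.inr ⟨k, t₁, rfl⟩) henc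
              | succ j =>
                  have hadm₁ : IsAdmissible (phi k :: t₁) := adm_phi_exp h₁
                  have hadm₂ : IsAdmissible (phi j :: t₂) := adm_phi_exp h₂
                  have hdd₁ : D = p * degW p 2 (phi k :: t₁) := by
                    rw [← hd₁]; exact deg_phi_succ k t₁
                  have hdd₂ : D = p * degW p 2 (phi j :: t₂) := by
                    rw [← hd₂]; exact deg_phi_succ j t₂
                  have hDeq : degW p 2 (phi k :: t₁) = degW p 2 (phi j :: t₂) :=
                    Nat.eq_of_mul_eq_mul_left (show 0 < p by omega) (by omega)
                  have hD'2 : 2 ≤ degW p 2 (phi k :: t₁) := (master hp hodd _ hadm₁).2.1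
                  have hlt : degW p 2 (phi k :: t₁) < D := by
                    have h3 : 3 * degW p 2 (phi k :: t₁) ≤ p * degW p 2 (phi k :: t₁) :=
                      Nat.mul_le_mul_right _ hp
                    omega
                  have henc' : enc p (phi k :: t₁) = enc p (phi j :: t₂) := by
                    have e1 := enc_phi_succ (p := p) k t₁
                    have e2 := enc_phi_succ (p := p) j t₂
                    rw [e1, e2] at henc
                    exact (List.append_inj' henc (by simp)).1
                  have := IH _ hlt (phi k :: t₁) (phi j :: t₂) hadm₁ hadm₂ rfl hDeq.symm
                    (by simpa using hlen) henc'
                  simp only [List.cons.injEq, phi.injEq] at this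
                  simp [this.1, this.2]

end S1
namespace S1
open Letter

lemma adm_mu_single : IsAdmissible [mu] := ⟨by simp, by simp, by simp [List.Chain']⟩

lemma surj {p : ℕ} (hp : 3 ≤ p) (hodd : Odd p) :
    ∀ M n a, n + a.length = M → 2 ≤ n →
      (∀ x ∈ a, 0 < x) →
      (∀ x ∈ a, x % (2*(p-1)) = 0 ∨ x % (2*(p-1)) = 1) →
      (∀ h, a.head? = some h → 4*(p-1) ≤ h) →
      a.Chain' (fun x y => p*x ≤ y) →
      (∀ l, a.getLast? = some l → p*l ≤ (p-1)*(n+1+a.sum)) →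
      ∃ w, IsAdmissible w ∧ w.length = n ∧ enc p w = a ∧
        (IsStable w ∨ ∃ l, a.getLast? = some l ∧ p*l = (p-1)*(n+1+a.sum)) := by
  intro M
  induction M using Nat.strong_induction_on with
  | _ M IH =>
  intro n a hM hn hpos hcong hhead hchain hlast
  rcases List.eq_nil_or_concat a with rfl | ⟨b, x, hbx⟩
  · -- empty sequence: alternating word
    refine ⟨pad (n-1) [mu], pad_adm adm_mu_single _, ?_, pad_enc _ _, Or.inl ?_⟩
    · rw [pad_len]; simp; omega
    · exact pad_stable _ _ (by omega)
  · -- a = b ++ [x]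
    rw [List.concat_eq_append] at hbx
    subst hbx
    set S := (b ++ [x]).sum with hS
    have hSsplit : S = b.sum + x := by simp [hS]
    have hgl : (b ++ [x]).getLast? = some x := by simp
    have hxb : p * x ≤ (p-1) * (n+1+S) := hlast x hgl
    obtain ⟨a₁, ha₁⟩ : ∃ h, (b ++ [x]).head? = some h := by
      rcases b with _ | ⟨y, b'⟩ <;> exact ⟨_, rfl⟩
    have ha₁4 : 4*(p-1) ≤ a₁ := hhead a₁ ha₁
    have hkey : (p-1) * S + a₁ ≤ p * x := chain_sum hp _ hchain a₁ x ha₁ hgl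
    have hkey4 : (p-1) * (S + 4) ≤ p * x := by
      have h1 : (p-1) * (S+4) = (p-1) * S + 4*(p-1) := by ring
      omega
    have hxpos : 0 < x := hpos x (by simp)
    -- conditions on b
    have hposb : ∀ y ∈ b, 0 < y := fun y hy => hpos y (by simp [hy])
    have hcongb : ∀ y ∈ b, y % (2*(p-1)) = 0 ∨ y % (2*(p-1)) = 1 :=
      fun y hy => hcong y (by simp [hy])
    have hheadb : ∀ h, b.head? = some h → 4*(p-1) ≤ h := by
      intro h hh
      refine hhead h ?_
      rcases b with _ | ⟨y, b'⟩
      · simp at hh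
      · simpa using hh
    have hchainb : b.Chain' (fun u v => p*u ≤ v) := (List.isChain_append.1 hchain).1
    have hlinkb : ∀ y, b.getLast? = some y → p * y ≤ x :=
      fun y hy => (List.isChain_append.1 hchain).2.2 y hy x (by simp)
    rcases hcong x (by simp) with hx0 | hx1
    · -- x ≡ 0 mod 2(p-1) : x = (p-1)*d, d even
      have hdm := Nat.div_add_mod x (2*(p-1))
      set q := x / (2*(p-1)) with hq
      set d := 2*q with hd
      have hxd : x = (p-1)*d := by
        have h2 : 2*(p-1)*q = (p-1)*d := by rw [hd]; ring
        omega
      have hpdd : (p-1)*d + d = p*d := by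
        have h3 : p - 1 + 1 = p := by omega
        calc (p-1)*d + d = ((p-1)+1)*d := by ring
        _ = p*d := by rw [h3]
      have hdeven : Even d := ⟨q, by omega⟩
      have hpx : p * x = (p-1) * (p*d) := by rw [hxd]; ring
      have hS4 : S + 4 ≤ p*d := by
        have := hkey4
        rw [hpx] at this
        exact Nat.le_of_mul_le_mul_left this (by omega)
      have hpostD : p*d ≤ n+1+S := by
        have h1 : (p-1)*(p*d) ≤ (p-1)*(n+1+S) := by rw [← hpx]; exact hxb
        exact Nat.le_of_mul_le_mul_left h1 (by omega)
      by_cases ht : p*d = n+1+S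
      · -- t = 0 : increment head exponent of the word for (n, b)
        have hnb : n + 1 + b.sum = d := by
          have h2 : p*d = (p-1)*d + d := by
            have h3 : p - 1 + 1 = p := by omega
            calc p*d = ((p-1)+1)*d := by rw [h3]
            _ = (p-1)*d + d := by ring
          omega
        have hlastb : ∀ l, b.getLast? = some l → p*l ≤ (p-1)*(n+1+b.sum) := by
          intro l hl
          rw [hnb, ← hxd]
          exact hlinkb l hl
        obtain ⟨wb, hwadm, hwlen, hwenc, -⟩ :=
          IH (n + b.length) (by simp at hM; omega) n b rfl hn hposb hcongb hheadb hchainb hlastb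
        have hwdeg : degW p 2 wb = d := by
          have := (master hp hodd wb hwadm).1
          rw [hwenc, hwlen, hnb] at this
          omega
        have hrp := headRP hp hodd hwadm (by omega) (by rw [hwdeg]; exact hdeven)
        rcases hrp with ⟨j, w', rfl⟩ | ⟨j, w', rfl⟩
        · refine ⟨rho (j+1) :: w', adm_rho_exp hwadm, by simpa using hwlen, ?_, Or.inr ?_⟩
          · rw [enc_rho_succ, hwdeg, hwenc, hxd]
          · exact ⟨x, hgl, by rw [hpx, ht]⟩
        · refine ⟨phi (j+1) :: w', adm_phi_exp hwadm, by simpa using hwlen, ?_, Or.inr ?_⟩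
          · rw [enc_phi_succ, hwdeg, hwenc, hxd]
          · exact ⟨x, hgl, by rw [hpx, ht]⟩
      · -- t ≥ 1 : pad
        have htlt : p*d < n+1+S := lt_of_le_of_ne hpostD ht
        set n' := p*d - 1 - S with hn'
        have hn'3 : 3 ≤ n' := by omega
        have hlast' : ∀ l, (b ++ [x]).getLast? = some l → p*l ≤ (p-1)*(n'+1+S) := by
          intro l hl
          rw [hgl] at hl
          cases hl
          have : n' + 1 + S = p*d := by omega
          rw [this, ← hpx]
        obtain ⟨w₀, h₀adm, h₀len, h₀enc, -⟩ :=
          IH (n' + (b ++ [x]).length) (by simp at hM ⊢; omega) n' (b ++ [x]) rfl (by omega)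
            hpos hcong hhead hchain hlast'
        refine ⟨pad (n - n') w₀, pad_adm h₀adm _, ?_, ?_, Or.inl ?_⟩
        · rw [pad_len, h₀len]; omega
        · rw [pad_enc, h₀enc]
        · exact pad_stable _ _ (by omega)
    · -- x ≡ 1 mod 2(p-1) : x = (p-1)*d + 1, d even
      have hdm := Nat.div_add_mod x (2*(p-1))
      set q := x / (2*(p-1)) with hq
      set d := 2*q with hd
      have hxd : x = (p-1)*d + 1 := by
        have h2 : 2*(p-1)*q = (p-1)*d := by rw [hd]; ring
        omega
      have hpdd : (p-1)*d + d = p*d := by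
        have h3 : p - 1 + 1 = p := by omega
        calc (p-1)*d + d = ((p-1)+1)*d := by ring
        _ = p*d := by rw [h3]
      have hdeven : Even d := ⟨q, by omega⟩
      have hpx : p * x = (p-1) * (p*d) + p := by
        have h2 : p * ((p-1)*d + 1) = (p-1)*(p*d) + p := by ring
        rw [hxd, h2]
      have hpxle : p * x ≤ (p-1) * (p*d+2) := by
        have h2 : (p-1) * (p*d+2) = (p-1)*(p*d) + 2*(p-1) := by ring
        omega
      have hS4 : S + 4 ≤ p*d + 2 := by
        have h3 : (p-1)*(S+4) ≤ (p-1)*(p*d+2) := le_trans hkey4 hpxle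
        exact Nat.le_of_mul_le_mul_left h3 (by omega)
      have hpostD : p*d + 2 ≤ n+1+S := by
        by_contra hcon
        push_neg at hcon
        have h1 : (p-1)*(n+1+S) ≤ (p-1)*(p*d+1) := Nat.mul_le_mul_left _ (by omega)
        have h2 : (p-1)*(p*d+1) = (p-1)*(p*d) + (p-1) := by ring
        omega
      by_cases ht : p*d + 2 = n+1+S
      · -- t = 0 : new letter φ⁰ on the word for (n-1, b)
        have hn3 : 3 ≤ n := by
          have h5 : S + 4 ≤ n+1+S := by
            have := hkey4
            have h6 : (p-1)*(S+4) ≤ (p-1)*(n+1+S) := le_trans hkey4 hxb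
            exact Nat.le_of_mul_le_mul_left h6 (by omega)
          omega
        have hnb : (n-1) + 1 + b.sum = d := by omega
        have hlastb : ∀ l, b.getLast? = some l → p*l ≤ (p-1)*((n-1)+1+b.sum) := by
          intro l hl
          rw [hnb]
          have hle := hlinkb l hl
          -- p*l ≠ x by parity mod 2(p-1)
          have hne : p * l ≠ x := by
            intro hcon
            have hmem : l ∈ b := by
              obtain ⟨hne, heq⟩ := List.mem_getLast?_eq_getLast (show l ∈ b.getLast? from hl)
              rw [heq]; exact List.getLast_mem hne
            rcases hcongb l hmem with h0 | h1
            · -- l even: p*l even but x odd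
              have hdml := Nat.div_add_mod l (2*(p-1))
              have hleven : Even l := by
                refine ⟨(p-1) * (l / (2*(p-1))), ?_⟩
                have h7 : 2*(p-1)*(l / (2*(p-1))) =
                    (p-1)*(l / (2*(p-1))) + (p-1)*(l / (2*(p-1))) := by ring
                omega
              have hpleven : Even (p*l) := hleven.mul_left p
              have hpdeven : Even ((p-1)*d) := (even_pm1 hodd).mul_right d
              obtain ⟨u, hu⟩ := hpleven
              obtain ⟨v, hv⟩ := hpdeven
              omega
            · -- l ≡ 1: p*l ≡ p ≠ 1
              have hdml := Nat.div_add_mod l (2*(p-1))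
              set r := l / (2*(p-1)) with hr
              have hl1 : l = 2*(p-1)*r + 1 := by omega
              have hplmod : p * l = 2*(p-1)*(p*r) + p := by rw [hl1]; ring
              have hxmod : x = 2*(p-1)*q + 1 := by omega
              have hpl : 2*(p-1)*(p*r) + p = 2*(p-1)*q + 1 := by omega
              have hmod := congrArg (· % (2*(p-1))) hpl
              simp only [Nat.mul_add_mod] at hmod
              have hpmod : p % (2*(p-1)) = p := Nat.mod_eq_of_lt (by omega)
              have h1mod : 1 % (2*(p-1)) = 1 := Nat.mod_eq_of_lt (by omega)
              omega
          have hxd1 : x - 1 = (p-1)*d := by omega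
          omega
        obtain ⟨wb, hwadm, hwlen, hwenc, -⟩ :=
          IH ((n-1) + b.length) (by simp at hM; omega) (n-1) b rfl (by omega)
            hposb hcongb hheadb hchainb hlastb
        have hwdeg : degW p 2 wb = d := by
          have := (master hp hodd wb hwadm).1
          rw [hwenc, hwlen, hnb] at this
          omega
        have hrp := headRP hp hodd hwadm (by omega) (by rw [hwdeg]; exact hdeven)
        have hadm : IsAdmissible (phi 0 :: wb) := by
          refine ⟨by simp, ?_, ?_⟩
          · rw [getLast?_cons_ne hwadm.1]
            exact hwadm.2.1
        
          · rw [List.Chain', List.isChain_cons]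
            refine ⟨?_, hwadm.2.2⟩
            intro y hy
            rcases hrp with ⟨j, w', rfl⟩ | ⟨j, w', rfl⟩ <;>
              simp only [List.head?_cons, Option.mem_def, Option.some.injEq] at hy <;>
              subst hy
            · exact Or.inr ⟨0, rfl⟩
            · exact Or.inr ⟨0, rfl⟩
        refine ⟨phi 0 :: wb, hadm, by simp [hwlen]; omega, ?_, Or.inl ?_⟩
        · rw [enc_phi_zero, hwdeg, hwenc, hxd, Nat.add_comm 1 ((p-1)*d)]
        · right; right; right; simp
      · -- t ≥ 1 : pad
        have htlt : p*d + 2 < n+1+S := lt_of_le_of_ne hpostD ht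
        set n' := p*d + 2 - 1 - S with hn'
        have hn'3 : 3 ≤ n' := by omega
        have hlast' : ∀ l, (b ++ [x]).getLast? = some l → p*l ≤ (p-1)*(n'+1+S) := by
          intro l hl
          rw [hgl] at hl
          cases hl
          have hE : n' + 1 + S = p*d + 2 := by omega
          rw [hE]
          exact hpxle
        obtain ⟨w₀, h₀adm, h₀len, h₀enc, -⟩ :=
          IH (n' + (b ++ [x]).length) (by simp at hM ⊢; omega) n' (b ++ [x]) rfl (by omega)
            hpos hcong hhead hchain hlast'
        refine ⟨pad (n - n') w₀, pad_adm h₀adm _, ?_, ?_, Or.inl ?_⟩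
        · rw [pad_len, h₀len]; omega
        · rw [pad_enc, h₀enc]
        · exact pad_stable _ _ (by omega)

end S1
theorem statement1 (p n : ℕ) (hp : p.Prime) (hpodd : Odd p) (hn : 2 ≤ n) :
    ∃ e : {w : List Letter // IsAdmissible w ∧ IsStable w ∧ w.length = n} ≃
        {a : List ℕ //
          (∀ i ∈ a, 0 < i) ∧
          (∀ i ∈ a, i % (2 * p - 2) = 0 ∨ i % (2 * p - 2) = 1) ∧
          (∀ h, a.head? = some h → 4 * (p - 1) ≤ h) ∧
          a.Chain' (fun x y => p * x ≤ y) ∧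
          (∀ l, a.getLast? = some l → p * l < (p - 1) * (n + 1 + a.sum))},
      ∀ w, degW p 2 w.val = n + 1 + (e w).val.sum := by
  classical
  have hp3 : 3 ≤ p := by
    have h2 := hp.two_le
    by_contra hcon
    push_neg at hcon
    interval_cases p
    exact absurd hpodd (by decide)
  have hpp : 2*p - 2 = 2*(p-1) := by omega
  have key : ∀ w : List Letter, IsAdmissible w → w.length = n →
      degW p 2 w = n + 1 + (S1.enc p w).sum := by
    intro w hadm hlen
    have h := (S1.master hp3 hpodd w hadm).1
    rw [hlen] at h; exact h
  have hmem : ∀ w : List Letter, IsAdmissible w → IsStable w → w.length = n →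
      (∀ i ∈ S1.enc p w, 0 < i) ∧
      (∀ i ∈ S1.enc p w, i % (2*p-2) = 0 ∨ i % (2*p-2) = 1) ∧
      (∀ h, (S1.enc p w).head? = some h → 4*(p-1) ≤ h) ∧
      (S1.enc p w).Chain' (fun x y => p*x ≤ y) ∧
      (∀ l, (S1.enc p w).getLast? = some l → p*l < (p-1)*(n+1+(S1.enc p w).sum)) := by
    intro w hadm hst hlen
    obtain ⟨M1, M2, M3, M4, M5, M6, M7, M8, M9⟩ := S1.master hp3 hpodd w hadm
    refine ⟨fun i hi => (M6 i hi).1, fun i hi => by rw [hpp]; exact (M6 i hi).2, M7, M8, ?_⟩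
    intro l hl
    have h9 := (M9 l hl).2 hst
    rw [M1, hlen] at h9
    omega
  let F : {w : List Letter // IsAdmissible w ∧ IsStable w ∧ w.length = n} →
      {a : List ℕ //
          (∀ i ∈ a, 0 < i) ∧
          (∀ i ∈ a, i % (2 * p - 2) = 0 ∨ i % (2 * p - 2) = 1) ∧
          (∀ h, a.head? = some h → 4 * (p - 1) ≤ h) ∧
          a.Chain' (fun x y => p * x ≤ y) ∧
          (∀ l, a.getLast? = some l → p * l < (p - 1) * (n + 1 + a.sum))} :=
    fun w => ⟨S1.enc p w.1, hmem w.1 w.2.1 w.2.2.1 w.2.2.2⟩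
  have hinj : Function.Injective F := by
    intro w₁ w₂ hF
    have henc : S1.enc p w₁.1 = S1.enc p w₂.1 := congrArg Subtype.val hF
    have hd₁ := key w₁.1 w₁.2.1 w₁.2.2.2
    have hd₂ := key w₂.1 w₂.2.1 w₂.2.2.2
    apply Subtype.ext
    exact S1.enc_inj hp3 hpodd (degW p 2 w₁.1) w₁.1 w₂.1 w₁.2.1 w₂.2.1 rfl
      (by rw [hd₂, ← henc, ← hd₁]) (by rw [w₁.2.2.2, w₂.2.2.2]) henc
  have hsurj : Function.Surjective F := by
    rintro ⟨a, h1, h2, h3, h4, h5⟩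
    obtain ⟨w, hadm, hlen, henc, hstb⟩ := S1.surj hp3 hpodd (n + a.length) n a rfl hn h1
      (fun x hx => by rw [← hpp]; exact h2 x hx) h3 h4
      (fun l hl => le_of_lt (h5 l hl))
    have hst : IsStable w := by
      rcases hstb with h | ⟨l, hl, heq⟩
      · exact h
      · exfalso
        have := h5 l hl
        omega
    refine ⟨⟨w, hadm, hst, hlen⟩, ?_⟩
    apply Subtype.ext
    exact henc
  refine ⟨Equiv.ofBijective F ⟨hinj, hsurj⟩, ?_⟩
  intro w
  exact key w.1 w.2.1 w.2.2.2
end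

section
/- Let p be an odd prime and m ≥ 1 an integer. Then there exists N such that for all n ≥ N, the number of stable admissible words of length n and degree n + m is equal to the number of sequences (a_1, ..., a_k) of positive integers with k ≥ 0 (the empty sequence allowed) such that each a_i is congruent to 0 or 1 modulo 2p−2, a_1 ≥ 4(p−1), a_{i+1} ≥ p·a_i for 1 ≤ i ≤ k−1, and 1 + a_1 + ... + a_k = m. -/
open Letter

namespace St2

/-- Inductive characterization of admissible words, built from the right. -/
inductive Adm : List Letter → Prop
  | base : Adm [mu]
  | sig {w} (h : Adm w) (hh : w.head? ≠ some sigma) : Adm (sigma :: w)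
  | rho (k : ℕ) {w} (h : Adm w) (hh : w.head? = some sigma) : Adm (Letter.rho k :: w)
  | phi (k : ℕ) {w} (h : Adm w) (hh : (∃ j, w.head? = some (Letter.rho j)) ∨
      (∃ j, w.head? = some (Letter.phi j))) : Adm (Letter.phi k :: w)

theorem Adm.ne_nil {w} (h : Adm w) : w ≠ [] := by cases h <;> simp

theorem adm_to_isAdmissible {w} (h : Adm w) : IsAdmissible w := by
  induction h with
  | base => refine ⟨by simp, by simp, List.isChain_singleton _⟩
  | @sig w h hh ih =>
    obtain ⟨hne, hlast, hchain⟩ := ih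
    obtain ⟨b, t, rfl⟩ : ∃ b t, w = b :: t := by
      cases w with
      | nil => exact absurd rfl hne
      | cons b t => exact ⟨b, t, rfl⟩
    refine ⟨by simp, by simpa using hlast, List.isChain_cons_cons.mpr ⟨?_, hchain⟩⟩
    cases b with
    | mu => simp [allowedPair]
    | sigma => simp at hh
    | rho k => simp [allowedPair]
    | phi k => simp [allowedPair]
  | @rho k w h hh ih =>
    obtain ⟨hne, hlast, hchain⟩ := ih
    obtain ⟨b, t, rfl⟩ : ∃ b t, w = b :: t := by
      cases w with
      | nil => exact absurd rfl hne
      | cons b t => exact ⟨b, t, rfl⟩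
    simp only [List.head?_cons, Option.some.injEq] at hh
    subst hh
    exact ⟨by simp, by simpa using hlast, List.isChain_cons_cons.mpr ⟨⟨k, rfl⟩, hchain⟩⟩
  | @phi k w h hh ih =>
    obtain ⟨hne, hlast, hchain⟩ := ih
    obtain ⟨b, t, rfl⟩ : ∃ b t, w = b :: t := by
      cases w with
      | nil => exact absurd rfl hne
      | cons b t => exact ⟨b, t, rfl⟩
    refine ⟨by simp, by simpa using hlast, List.isChain_cons_cons.mpr ⟨?_, hchain⟩⟩
    rcases hh with ⟨j, hj⟩ | ⟨j, hj⟩ <;>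
      simp only [List.head?_cons, Option.some.injEq] at hj <;> subst hj <;>
      exact Or.inr ⟨k, rfl⟩

theorem isAdmissible_to_adm : ∀ w, IsAdmissible w → Adm w := by
  intro w
  induction w with
  | nil => rintro ⟨hne, -, -⟩; exact absurd rfl hne
  | cons l t ih =>
    rintro ⟨-, hlast, hchain⟩
    cases t with
    | nil =>
      simp only [List.getLast?_singleton, Option.some.injEq] at hlast
      subst hlast
      exact Adm.base
    | cons b t =>
      rw [List.getLast?_cons_cons] at hlast
      simp only [List.Chain', List.isChain_cons_cons] at hchain
      obtain ⟨hab, hchain⟩ := hchain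
      have hadm : Adm (b :: t) := ih ⟨by simp, hlast, hchain⟩
      cases l with
      | mu => cases b <;> simp [allowedPair] at hab
      | sigma =>
        refine Adm.sig hadm ?_
        cases b with
        | sigma => simp [allowedPair] at hab
        | mu => simp
        | rho k => simp
        | phi k => simp
      | rho k =>
        cases b with
        | mu => simp [allowedPair] at hab
        | sigma => exact Adm.rho k hadm (by simp)
        | rho j => simp [allowedPair] at hab
        | phi j => simp [allowedPair] at hab
      | phi k =>
        cases b with
        | mu => simp [allowedPair] at hab
        | sigma => simp [allowedPair] at hab
        | rho j => exact Adm.phi k hadm (Or.inl ⟨j, by simp⟩)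
        | phi j => exact Adm.phi k hadm (Or.inr ⟨j, by simp⟩)

theorem adm_iff {w} : Adm w ↔ IsAdmissible w :=
  ⟨adm_to_isAdmissible, isAdmissible_to_adm w⟩

/-- whether a letter is part of the stabilization padding -/
def padB : Letter → Bool
  | sigma => true
  | Letter.rho 0 => true
  | _ => false

def prepstep (w : List Letter) : List Letter :=
  (if w.head? = some sigma then Letter.rho 0 else sigma) :: w

def pad : ℕ → List Letter → List Letter
  | 0, w => w
  | j+1, w => prepstep (pad j w)

def core (w : List Letter) : List Letter := w.dropWhile padB

def entR (p d k : ℕ) : List ℕ := (List.range k).map (fun i => (p-1)*(1+d)*p^i)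

def entF (p d k : ℕ) : List ℕ :=
  (1+(p-1)*d) :: (List.range k).map (fun i => (p-1)*(2+p*d)*p^i)

def decode (p : ℕ) : List Letter → List ℕ
  | [] => []
  | mu :: _ => []
  | sigma :: w => decode p w
  | Letter.rho k :: w => decode p w ++ entR p (degW p 2 w) k
  | Letter.phi k :: w => decode p w ++ entF p (degW p 2 w) k

def bump : List Letter → List Letter
  | Letter.rho k :: t => Letter.rho (k+1) :: t
  | Letter.phi k :: t => Letter.phi (k+1) :: t
  | w => w

def ext (p : ℕ) (w : List Letter) (a : ℕ) : List Letter :=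
  if a = (p-1) * degW p 2 w then bump w
  else if a % (2*(p-1)) = 0 then Letter.rho 1 :: pad (a/(p-1) - 1 - degW p 2 w) w
  else Letter.phi 0 :: pad ((a-1)/(p-1) - degW p 2 w) w

def encode (p : ℕ) (a : List ℕ) : List Letter := a.foldl (ext p) [mu]

/-! ### basic lemmas -/

theorem length_dropWhile_le (q : Letter → Bool) (w : List Letter) :
    (w.dropWhile q).length ≤ w.length := by
  induction w with
  | nil => simp
  | cons a w ih =>
    rw [List.dropWhile_cons]
    split
    · exact ih.trans (by simp)
    · simp

theorem geom_sum (p : ℕ) (hp : 1 ≤ p) (k : ℕ) :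
    (p-1) * ((List.range k).map (fun i => p^i)).sum + 1 = p^k := by
  induction k with
  | zero => simp
  | succ k ih =>
    rw [List.range_succ, List.map_append, List.sum_append, pow_succ]
    simp only [List.map_cons, List.map_nil, List.sum_cons, List.sum_nil]
    rw [Nat.mul_add, Nat.mul_add]
    have hq : p - 1 + 1 = p := by omega
    have h2 : p ^ k * p = (p-1) * p^k + p^k := by
      rw [mul_comm, ← Nat.succ_mul]
      congr 1
      omega
    linarith [ih, h2]

theorem deg_ge {p : ℕ} (hp : 1 ≤ p) {w} (h : Adm w) : w.length + 1 ≤ degW p 2 w := by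
  induction h with
  | base => simp [degW]
  | @sig w h hh ih => simp only [degW, List.length_cons]; omega
  | @rho k w h hh ih =>
    have h1 : 1 ≤ p ^ k := Nat.one_le_pow _ _ (by omega)
    simp only [degW, List.length_cons]
    nlinarith
  | @phi k w h hh ih =>
    have h1 : 1 ≤ p ^ k := Nat.one_le_pow _ _ (by omega)
    simp only [degW, List.length_cons]
    have h2 : degW p 2 w ≤ p * degW p 2 w := Nat.le_mul_of_pos_left _ (by omega)
    nlinarith

theorem deg_even {p : ℕ} (hodd : Odd p) {w} (h : Adm w) :
    (Even (degW p 2 w) ↔ w.head? ≠ some sigma) := by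
  have hpow : ∀ k : ℕ, Odd (p ^ k) := fun k => hodd.pow
  induction h with
  | base => simp [degW]
  | @sig w h hh ih =>
    have hd : Even (degW p 2 w) := ih.mpr hh
    simp only [degW, List.head?_cons, ne_eq, not_true_eq_false, iff_false]
    rw [Nat.add_comm, Nat.even_add_one]
    simpa using hd
  | @rho k w h hh ih =>
    have hd : ¬ Even (degW p 2 w) := fun he => (ih.mp he) hh
    have h1 : Even (1 + degW p 2 w) := by
      rw [Nat.add_comm, Nat.even_add_one]; exact hd
    exact iff_of_true (h1.mul_left _) (by simp)
  | @phi k w h hh ih =>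
    have hne : w.head? ≠ some sigma := by
      rcases hh with ⟨j, hj⟩ | ⟨j, hj⟩ <;> simp [hj]
    have hd : Even (degW p 2 w) := ih.mpr hne
    have h1 : Even (2 + p * degW p 2 w) := by
      rcases hd with ⟨r, hr⟩
      exact ⟨1 + p * r, by rw [hr]; ring⟩
    exact iff_of_true (h1.mul_left _) (by simp)

/-! ### decode lemmas -/

theorem entR_sum (p d k : ℕ) :
    (entR p d k).sum = (p-1)*(1+d) * ((List.range k).map (fun i => p^i)).sum :=
  List.sum_map_mul_left _ _ _

theorem entF_sum (p d k : ℕ) :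
    (entF p d k).sum = (1+(p-1)*d) + (p-1)*(2+p*d) * ((List.range k).map (fun i => p^i)).sum := by
  unfold entF
  rw [List.sum_cons, List.sum_map_mul_left]

theorem decode_sum {p : ℕ} (hp : 1 ≤ p) {w} (h : Adm w) :
    degW p 2 w = w.length + 1 + (decode p w).sum := by
  induction h with
  | base => simp [degW, decode]
  | @sig w h hh ih =>
    simp only [degW, decode, List.length_cons]
    omega
  | @rho k w h hh ih =>
    have hg := geom_sum p hp k
    simp only [degW, decode, List.length_cons, List.sum_append, entR_sum]
    set G := ((List.range k).map (fun i => p^i)).sum with hG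
    set S := (decode p w).sum with hS
    rw [ih, ← hg]
    ring
  | @phi k w h hh ih =>
    obtain ⟨q, rfl⟩ : ∃ q, p = q + 1 := ⟨p-1, by omega⟩
    have hg := geom_sum (q+1) hp k
    simp only [degW, decode, List.length_cons, List.sum_append, entF_sum,
      Nat.add_sub_cancel] at *
    set G := ((List.range k).map (fun i => (q+1)^i)).sum with hG
    set S := (decode (q+1) w).sum with hS
    rw [ih, ← hg]
    ring

theorem decode_pos {p : ℕ} (hp : 2 ≤ p) {w} (h : Adm w) :
    ∀ x ∈ decode p w, 0 < x := by
  induction h with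
  | base => simp [decode]
  | @sig w h hh ih => simpa [decode] using ih
  | @rho k w h hh ih =>
    intro x hx
    simp only [decode, List.mem_append] at hx
    rcases hx with hx | hx
    · exact ih x hx
    · simp only [entR, List.mem_map, List.mem_range] at hx
      obtain ⟨i, -, rfl⟩ := hx
      have h1 : 0 < p ^ i := Nat.pow_pos (n := i) (by omega)
      have h2 : 0 < p - 1 := by omega
      positivity
  | @phi k w h hh ih =>
    intro x hx
    simp only [decode, List.mem_append, entF, List.mem_cons, List.mem_map,
      List.mem_range] at hx
    rcases hx with hx | rfl | hx
    · exact ih x hx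
    · omega
    · obtain ⟨i, -, rfl⟩ := hx
      have h1 : 0 < p ^ i := Nat.pow_pos (n := i) (by omega)
      have h2 : 0 < p - 1 := by omega
      positivity

theorem decode_res {p : ℕ} (hp : 3 ≤ p) (hodd : Odd p) {w} (h : Adm w) :
    ∀ x ∈ decode p w, x % (2*(p-1)) = 0 ∨ x % (2*(p-1)) = 1 := by
  induction h with
  | base => simp [decode]
  | @sig w h hh ih => simpa [decode] using ih
  | @rho k w h hh ih =>
    intro x hx
    simp only [decode, List.mem_append] at hx
    rcases hx with hx | hx
    · exact ih x hx
    · simp only [entR, List.mem_map, List.mem_range] at hx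
      obtain ⟨i, -, rfl⟩ := hx
      left
      have hd : ¬ Even (degW p 2 w) := fun he => by
        have := (deg_even hodd h).mp he; simp [hh] at this
      obtain ⟨s, hs⟩ : ∃ s, 1 + degW p 2 w = s + s := by
        rcases Nat.even_or_odd (degW p 2 w) with he | ho
        · exact absurd he hd
        · obtain ⟨s, hs⟩ := ho; exact ⟨s+1, by omega⟩
      have : (p-1)*(1+degW p 2 w)*p^i = 2*(p-1) * (s * p^i) := by rw [hs]; ring
      rw [this]
      exact Nat.mul_mod_right _ _
  | @phi k w h hh ih =>
    have hne : w.head? ≠ some sigma := by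
      rcases hh with ⟨j, hj⟩ | ⟨j, hj⟩ <;> simp [hj]
    obtain ⟨s, hs⟩ := (deg_even hodd h).mpr hne
    intro x hx
    simp only [decode, List.mem_append, entF, List.mem_cons, List.mem_map,
      List.mem_range] at hx
    rcases hx with hx | rfl | hx
    · exact ih x hx
    · right
      have : 1 + (p-1) * degW p 2 w = 1 + 2*(p-1) * s := by rw [hs]; ring
      rw [this, Nat.add_mul_mod_self_left]
      exact Nat.mod_eq_of_lt (by omega)
    · obtain ⟨i, -, rfl⟩ := hx
      left
      have : (p-1)*(2+p*degW p 2 w)*p^i = 2*(p-1) * ((1 + p*s) * p^i) := by rw [hs]; ring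
      rw [this]
      exact Nat.mul_mod_right _ _

theorem entR_succ (p d k : ℕ) : entR p d (k+1) = entR p d k ++ [(p-1)*(1+d)*p^k] := by
  unfold entR; rw [List.range_succ, List.map_append]; rfl

theorem entF_succ (p d k : ℕ) : entF p d (k+1) = entF p d k ++ [(p-1)*(2+p*d)*p^k] := by
  unfold entF; rw [List.range_succ, List.map_append]; rfl

theorem getLast?_append_right {α} {l1 l2 : List α} {a : α} (h : l2.getLast? = some a) :
    (l1 ++ l2).getLast? = some a := by
  rw [List.getLast?_append, h]; rfl

theorem geom_getLast (c p k : ℕ) :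
    ((List.range (k+1)).map (fun i => c * p^i)).getLast? = some (c * p^k) := by
  rw [List.range_succ, List.map_append]
  exact List.getLast?_concat

theorem geom_head (c p k : ℕ) :
    ((List.range (k+1)).map (fun i => c * p^i)).head? = some c := by
  rw [List.range_succ_eq_map]
  simp

theorem chain_geom (p c : ℕ) (k : ℕ) :
    ((List.range k).map (fun i => c * p^i)).Chain' (fun x y => p * x ≤ y) := by
  induction k with
  | zero => simp [List.Chain']
  | succ k ih =>
    rw [List.range_succ, List.map_append]
    simp only [List.Chain', List.isChain_append]
    refine ⟨ih, by simp, ?_⟩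
    intro x hx y hy
    simp only [List.map_cons, List.map_nil, List.head?_cons, Option.mem_def,
      Option.some.injEq] at hy
    subst hy
    cases k with
    | zero => simp at hx
    | succ k =>
      rw [Option.mem_def, geom_getLast] at hx
      obtain rfl : c * p ^ k = x := Option.some.inj hx
      exact le_of_eq (by ring)

theorem entR_getLast (p d k : ℕ) :
    (entR p d (k+1)).getLast? = some ((p-1)*(1+d)*p^k) := geom_getLast _ _ _

theorem entR_head (p d k : ℕ) :
    (entR p d (k+1)).head? = some ((p-1)*(1+d)) := geom_head _ _ _

theorem entF_head (p d k : ℕ) : (entF p d k).head? = some (1+(p-1)*d) := rfl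

theorem entF_getLast0 (p d : ℕ) : (entF p d 0).getLast? = some (1+(p-1)*d) := rfl

theorem entF_getLast (p d k : ℕ) :
    (entF p d (k+1)).getLast? = some ((p-1)*(2+p*d)*p^k) := by
  rw [entF_succ]
  exact List.getLast?_concat

theorem key_ineq {p : ℕ} (hp : 3 ≤ p) (d : ℕ) : p*(1+(p-1)*d) ≤ (p-1)*(2+p*d) := by
  obtain ⟨q, rfl⟩ : ∃ q, p = q + 1 := ⟨p-1, by omega⟩
  simp only [Nat.add_sub_cancel]
  nlinarith

theorem entR_chain (p d k : ℕ) : (entR p d k).Chain' (fun x y => p * x ≤ y) :=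
  chain_geom _ _ _

theorem entF_chain {p : ℕ} (hp : 3 ≤ p) (d k : ℕ) :
    (entF p d k).Chain' (fun x y => p * x ≤ y) := by
  unfold entF
  simp only [List.Chain', List.isChain_cons]
  refine ⟨?_, chain_geom _ _ _⟩
  intro y hy
  cases k with
  | zero => simp at hy
  | succ k =>
    rw [Option.mem_def, geom_head] at hy
    obtain rfl : (p-1)*(2+p*d) = y := Option.some.inj hy
    exact key_ineq hp d

theorem deg_ge_two {p : ℕ} (hp : 1 ≤ p) {w} (h : Adm w) : 2 ≤ degW p 2 w := by
  have h1 := deg_ge hp h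
  have h2 : w ≠ [] := h.ne_nil
  have : 1 ≤ w.length := List.length_pos_iff.mpr h2
  omega

theorem deg_odd_ge_three {p : ℕ} (hp : 3 ≤ p) (hodd : Odd p) {w} (h : Adm w)
    (hh : w.head? = some sigma) : 3 ≤ degW p 2 w ∧ ¬ Even (degW p 2 w) := by
  have h1 : ¬ Even (degW p 2 w) := fun he => ((deg_even hodd h).mp he) hh
  have h2 := deg_ge_two (p := p) (by omega) h
  constructor
  · rcases Nat.even_or_odd (degW p 2 w) with he | ⟨r, hr⟩
    · exact absurd he h1
    · omega
  · exact h1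

theorem decode_head {p : ℕ} (hp : 3 ≤ p) (hodd : Odd p) {w} (h : Adm w) :
    ∀ x, (decode p w).head? = some x → 4*(p-1) ≤ x := by
  induction h with
  | base => simp [decode]
  | @sig w h hh ih => simpa [decode] using ih
  | @rho k w h hh ih =>
    intro x hx
    simp only [decode] at hx
    rw [List.head?_append] at hx
    cases hd : (decode p w).head? with
    | some y =>
      rw [hd] at hx
      exact (by simpa using hx : y = x) ▸ ih y hd
    | none =>
      rw [hd] at hx
      simp only [Option.none_or] at hx
      cases k with
      | zero => simp [entR] at hx
      | succ k =>
        rw [entR_head] at hx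
        obtain rfl : (p-1)*(1 + degW p 2 w) = x := Option.some.inj hx
        obtain ⟨h3, -⟩ := deg_odd_ge_three hp hodd h hh
        calc 4*(p-1) = (p-1)*4 := by ring
        _ ≤ (p-1)*(1 + degW p 2 w) := Nat.mul_le_mul_left _ (by omega)
  | @phi k w h hh ih =>
    intro x hx
    simp only [decode] at hx
    rw [List.head?_append] at hx
    cases hd : (decode p w).head? with
    | some y =>
      rw [hd] at hx
      exact (by simpa using hx : y = x) ▸ ih y hd
    | none =>
      rw [hd] at hx
      simp only [Option.none_or, entF_head] at hx
      obtain rfl : 1+(p-1)*degW p 2 w = x := Option.some.inj hx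
      have hnil : decode p w = [] := List.head?_eq_none_iff.mp hd
      have hd4 : 4 ≤ degW p 2 w := by
        cases h with
        | base => simp at hh
        | @sig w' h' hh' => rcases hh with ⟨j, hj⟩ | ⟨j, hj⟩ <;> simp at hj
        | @rho j w' h' hh' =>
          obtain rfl : j = 0 := by
            simp only [decode] at hnil
            have := List.append_eq_nil_iff.mp hnil
            simpa [entR, List.range_eq_nil] using this.2
          obtain ⟨h3, -⟩ := deg_odd_ge_three hp hodd h' hh'
          simp only [degW, pow_zero, one_mul]
          omega
        | @phi j w' h' hh' =>
          exfalso
          simp only [decode] at hnil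
          have := List.append_eq_nil_iff.mp hnil
          simp [entF] at this
      calc 4*(p-1) = (p-1)*4 := by ring
      _ ≤ (p-1)*degW p 2 w := Nat.mul_le_mul_left _ hd4
      _ ≤ 1+(p-1)*degW p 2 w := by omega

theorem decode_last {p : ℕ} (hp : 3 ≤ p) (hodd : Odd p) {w} (h : Adm w) :
    ∀ x, (decode p w).getLast? = some x → p * x ≤ (p-1) * degW p 2 w := by
  induction h with
  | base => simp [decode]
  | @sig w h hh ih =>
    intro x hx
    simp only [decode] at hx
    calc p * x ≤ (p-1) * degW p 2 w := ih x hx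
    _ ≤ (p-1) * degW p 2 (sigma :: w) := by
        simp only [degW]; exact Nat.mul_le_mul_left _ (by omega)
  | @rho k w h hh ih =>
    intro x hx
    simp only [decode] at hx
    cases k with
    | zero =>
      simp only [entR, List.range_zero, List.map_nil, List.append_nil] at hx
      calc p * x ≤ (p-1) * degW p 2 w := ih x hx
      _ ≤ (p-1) * degW p 2 (Letter.rho 0 :: w) := by
          simp only [degW, pow_zero, one_mul]
          exact Nat.mul_le_mul_left _ (by omega)
    | succ k =>
      rw [getLast?_append_right (entR_getLast p _ k)] at hx
      obtain rfl : (p-1)*(1 + degW p 2 w)*p^k = x := Option.some.inj hx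
      apply le_of_eq
      simp only [degW]
      rw [pow_succ]
      ring
  | @phi k w h hh ih =>
    intro x hx
    simp only [decode] at hx
    cases k with
    | zero =>
      rw [getLast?_append_right (entF_getLast0 p _)] at hx
      obtain rfl : 1+(p-1)*degW p 2 w = x := Option.some.inj hx
      simp only [degW, pow_zero, one_mul]
      exact key_ineq hp _
    | succ k =>
      rw [getLast?_append_right (entF_getLast p _ k)] at hx
      obtain rfl : (p-1)*(2 + p * degW p 2 w)*p^k = x := Option.some.inj hx
      apply le_of_eq
      simp only [degW]
      rw [pow_succ]
      ring

theorem decode_chain {p : ℕ} (hp : 3 ≤ p) (hodd : Odd p) {w} (h : Adm w) :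
    (decode p w).Chain' (fun x y => p * x ≤ y) := by
  induction h with
  | base => simp [decode, List.Chain']
  | @sig w h hh ih => simpa [decode] using ih
  | @rho k w h hh ih =>
    simp only [decode]
    simp only [List.Chain', List.isChain_append]
    refine ⟨ih, entR_chain p _ k, ?_⟩
    intro x hx y hy
    cases k with
    | zero => simp [entR] at hy
    | succ k =>
      rw [Option.mem_def, entR_head] at hy
      obtain rfl : (p-1)*(1 + degW p 2 w) = y := Option.some.inj hy
      calc p * x ≤ (p-1) * degW p 2 w := decode_last hp hodd h x hx
      _ ≤ (p-1)*(1 + degW p 2 w) := Nat.mul_le_mul_left _ (by omega)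
  | @phi k w h hh ih =>
    simp only [decode]
    simp only [List.Chain', List.isChain_append]
    refine ⟨ih, entF_chain hp _ k, ?_⟩
    intro x hx y hy
    rw [Option.mem_def, entF_head] at hy
    obtain rfl : 1+(p-1)*degW p 2 w = y := Option.some.inj hy
    calc p * x ≤ (p-1) * degW p 2 w := decode_last hp hodd h x hx
    _ ≤ 1+(p-1)*degW p 2 w := by omega

/-! ### pad lemmas -/

theorem deg_prepstep (p : ℕ) (w : List Letter) :
    degW p 2 (prepstep w) = 1 + degW p 2 w := by
  unfold prepstep; split <;> simp [degW]

theorem deg_pad (p j : ℕ) (w : List Letter) : degW p 2 (pad j w) = degW p 2 w + j := by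
  induction j with
  | zero => rfl
  | succ j ih => rw [pad, deg_prepstep, ih]; omega

theorem len_pad (j : ℕ) (w : List Letter) : (pad j w).length = w.length + j := by
  induction j with
  | zero => rfl
  | succ j ih => simp [pad, prepstep, ih]; omega

theorem decode_prepstep (p : ℕ) (w : List Letter) : decode p (prepstep w) = decode p w := by
  unfold prepstep; split <;> simp [decode, entR]

theorem decode_pad (p j : ℕ) (w : List Letter) : decode p (pad j w) = decode p w := by
  induction j with
  | zero => rfl
  | succ j ih => rw [pad, decode_prepstep, ih]

theorem adm_pad {w} (h : Adm w) (j : ℕ) : Adm (pad j w) := by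
  induction j with
  | zero => exact h
  | succ j ih =>
    rw [pad]; unfold prepstep; split
    · exact Adm.rho 0 ih (by assumption)
    · exact Adm.sig ih (by assumption)

theorem head_prepstep (w : List Letter) :
    (prepstep w).head? = some (if w.head? = some sigma then Letter.rho 0 else sigma) := by
  simp [prepstep]

theorem head_pad {w} (hh : w.head? ≠ some sigma) (j : ℕ) :
    (pad j w).head? = if j = 0 then w.head? else if j % 2 = 1 then some sigma
      else some (Letter.rho 0) := by
  induction j with
  | zero => simp [pad]
  | succ j ih =>
    rw [pad, head_prepstep, ih]
    rcases Nat.eq_zero_or_pos j with rfl | hj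
    · norm_num
      exact fun h => absurd h hh
    · by_cases hpar : j % 2 = 1
      · have h2 : ¬ ((j+1) % 2 = 1) := by omega
        simp [hpar, hj.ne', h2]
      · have h2 : (j+1) % 2 = 1 := by omega
        simp [hpar, hj.ne', h2]

/-! ### core lemmas -/

theorem core_prepstep (w : List Letter) : core (prepstep w) = core w := by
  unfold prepstep core; split <;> simp [List.dropWhile_cons, padB]

theorem core_pad (j : ℕ) (w : List Letter) : core (pad j w) = core w := by
  induction j with
  | zero => rfl
  | succ j ih => rw [pad, core_prepstep, ih]

theorem core_cons_of_not_pad {l : Letter} (hl : padB l = false) (w : List Letter) :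
    core (l :: w) = l :: w := by
  unfold core; rw [List.dropWhile_cons, hl]; simp

theorem core_cons_pad {l : Letter} (hl : padB l = true) (w : List Letter) :
    core (l :: w) = core w := by
  unfold core; rw [List.dropWhile_cons, hl]; simp

theorem core_len_le (w : List Letter) : (core w).length ≤ w.length :=
  length_dropWhile_le padB w

theorem pad_core {w} (h : Adm w) : pad (w.length - (core w).length) (core w) = w := by
  induction h with
  | base =>
    have hc : core [mu] = [mu] := core_cons_of_not_pad (l := mu) rfl []
    rw [hc, Nat.sub_self]
    rfl
  | @sig w h hh ih =>
    rw [core_cons_pad (by rfl)]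
    have hle := core_len_le w
    have hlen : (sigma :: w).length - (core w).length = (w.length - (core w).length) + 1 := by
      simp only [List.length_cons]; omega
    rw [hlen, pad, ih]
    unfold prepstep
    rw [if_neg hh]
  | @rho k w h hh ih =>
    cases k with
    | zero =>
      rw [core_cons_pad (by rfl)]
      have hle := core_len_le w
      have hlen : (Letter.rho 0 :: w).length - (core w).length
          = (w.length - (core w).length) + 1 := by
        simp only [List.length_cons]; omega
      rw [hlen, pad, ih]
      unfold prepstep
      rw [if_pos hh]
    | succ k =>
      rw [core_cons_of_not_pad (by rfl), Nat.sub_self]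
      rfl
  | @phi k w h hh ih =>
    rw [core_cons_of_not_pad (by rfl), Nat.sub_self]
    rfl

theorem adm_core {w} (h : Adm w) : Adm (core w) := by
  induction h with
  | base => rw [core_cons_of_not_pad (l := mu) rfl []]; exact Adm.base
  | @sig w h hh ih => rw [core_cons_pad (by rfl)]; exact ih
  | @rho k w h hh ih =>
    cases k with
    | zero => rw [core_cons_pad (by rfl)]; exact ih
    | succ k => rw [core_cons_of_not_pad (by rfl)]; exact Adm.rho _ h hh
  | @phi k w h hh ih =>
    rw [core_cons_of_not_pad (by rfl)]; exact Adm.phi _ h hh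

theorem core_head (w : List Letter) : ∀ x ∈ (core w).head?, padB x = false := by
  induction w with
  | nil => simp [core]
  | cons l w ih =>
    intro x hx
    unfold core at hx
    rw [List.dropWhile_cons] at hx
    split at hx
    · exact ih x hx
    · simp only [List.head?_cons, Option.mem_def, Option.some.injEq] at hx
      subst hx
      simp_all

theorem core_excess {p : ℕ} {w} (h : Adm w) :
    degW p 2 w + (core w).length = degW p 2 (core w) + w.length := by
  have key := pad_core h
  have h1 : degW p 2 w = degW p 2 (core w) + (w.length - (core w).length) := by
    conv_lhs => rw [← key]
    rw [deg_pad]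
  have h2 : w.length = (core w).length + (w.length - (core w).length) := by
    conv_lhs => rw [← key]
    rw [len_pad]
  omega

theorem core_len_bound {p : ℕ} (hp : 3 ≤ p) {w} (h : Adm w)
    (hc : ∀ x ∈ w.head?, padB x = false) :
    w.length ≤ 1 + (decode p w).sum := by
  cases h with
  | base => simp [decode]
  | @sig w h hh => simp [padB] at hc
  | @rho k w h hh =>
    obtain ⟨k, rfl⟩ : ∃ k', k = k' + 1 := by
      cases k with
      | zero => simp [padB] at hc
      | succ k => exact ⟨k, rfl⟩
    have hmem : (p-1)*(1+degW p 2 w)*p^0 ∈ decode p (Letter.rho (k+1) :: w) := by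
      simp only [decode, List.mem_append]
      exact Or.inr (List.mem_map.mpr ⟨0, List.mem_range.mpr (by omega), rfl⟩)
    have hsum := List.le_sum_of_mem hmem
    have hdg := deg_ge (p := p) (by omega) h
    have h2 : 2*(1+degW p 2 w) ≤ (p-1)*(1+degW p 2 w) :=
      Nat.mul_le_mul_right _ (by omega)
    simp only [pow_zero, mul_one] at hsum
    simp only [List.length_cons]
    linarith
  | @phi k w h hh =>
    have hmem : 1+(p-1)*degW p 2 w ∈ decode p (Letter.phi k :: w) := by
      simp only [decode, List.mem_append, entF]
      exact Or.inr List.mem_cons_self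
    have hsum := List.le_sum_of_mem hmem
    have hdg := deg_ge (p := p) (by omega) h
    have h2 : 2*degW p 2 w ≤ (p-1)*degW p 2 w := Nat.mul_le_mul_right _ (by omega)
    simp only [List.length_cons]
    linarith

/-! ### ext lemmas -/

theorem ext_merge_rho (p : ℕ) (k : ℕ) (t : List Letter) :
    ext p (Letter.rho k :: t) ((p-1) * degW p 2 (Letter.rho k :: t)) = Letter.rho (k+1) :: t := by
  unfold ext; rw [if_pos rfl]; rfl

theorem ext_merge_phi (p : ℕ) (k : ℕ) (t : List Letter) :
    ext p (Letter.phi k :: t) ((p-1) * degW p 2 (Letter.phi k :: t)) = Letter.phi (k+1) :: t := by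
  unfold ext; rw [if_pos rfl]; rfl

theorem ext_newR {p : ℕ} (hp : 2 ≤ p) {d : ℕ} (hd : Even (1+d)) {c : List Letter}
    (hlt : degW p 2 c < 1 + d) :
    ext p c ((p-1)*(1+d)) = Letter.rho 1 :: pad (d - degW p 2 c) c := by
  have h1 : (p-1)*(1+d) ≠ (p-1) * degW p 2 c := by
    intro heq
    have := Nat.eq_of_mul_eq_mul_left (show 0 < p-1 by omega) heq
    omega
  obtain ⟨s, hs⟩ := hd
  have h2 : ((p-1)*(1+d)) % (2*(p-1)) = 0 := by
    have : (p-1)*(1+d) = 2*(p-1) * s := by rw [hs]; ring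
    rw [this]
    exact Nat.mul_mod_right _ _
  have h3 : (p-1)*(1+d)/(p-1) = 1+d := Nat.mul_div_cancel_left _ (by omega)
  rw [ext, if_neg h1, if_pos h2, h3]
  congr 2
  omega

theorem ext_newF {p : ℕ} (hp : 3 ≤ p) {d : ℕ} (hd : Even d) {c : List Letter}
    (hc : Even (degW p 2 c)) :
    ext p c (1+(p-1)*d) = Letter.phi 0 :: pad (d - degW p 2 c) c := by
  obtain ⟨s, hs⟩ := hd
  obtain ⟨r, hr⟩ := hc
  have hm1 : (1+(p-1)*d) % (2*(p-1)) = 1 := by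
    have : 1+(p-1)*d = 1 + 2*(p-1)*s := by rw [hs]; ring
    rw [this, Nat.add_mul_mod_self_left]
    exact Nat.mod_eq_of_lt (by omega)
  have h1 : 1+(p-1)*d ≠ (p-1) * degW p 2 c := by
    intro heq
    have h0 : ((p-1) * degW p 2 c) % (2*(p-1)) = 0 := by
      have : (p-1) * degW p 2 c = 2*(p-1)*r := by rw [hr]; ring
      rw [this]
      exact Nat.mul_mod_right _ _
    rw [heq, h0] at hm1
    omega
  have h2 : ¬ ((1+(p-1)*d) % (2*(p-1)) = 0) := by omega
  have h3 : (1+(p-1)*d-1)/(p-1) = d := by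
    rw [Nat.add_sub_cancel_left]
    exact Nat.mul_div_cancel_left _ (by omega)
  rw [ext, if_neg h1, if_neg h2, h3]

/-! ### encode ∘ decode = core -/

theorem core_reconstruct {p : ℕ} {t} (ht : Adm t) :
    pad (degW p 2 t - degW p 2 (core t)) (core t) = t := by
  have hce := core_excess (p := p) ht
  have hll := core_len_le t
  have heq : degW p 2 t - degW p 2 (core t) = t.length - (core t).length := by omega
  rw [heq]
  exact pad_core ht

theorem core_deg_le {p : ℕ} {t} (ht : Adm t) : degW p 2 (core t) ≤ degW p 2 t := by
  have hce := core_excess (p := p) ht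
  have hll := core_len_le t
  omega

theorem core_head_ne_sigma (t : List Letter) : (core t).head? ≠ some sigma := by
  intro hx
  have := core_head t sigma hx
  simp [padB] at this

theorem fold_entR {p : ℕ} (hp : 3 ≤ p) (hodd : Odd p) {t} (ht : Adm t)
    (hh : t.head? = some sigma) (k : ℕ) (hk : 1 ≤ k) :
    List.foldl (ext p) (core t) (entR p (degW p 2 t) k) = Letter.rho k :: t := by
  obtain ⟨h3, hoddd⟩ := deg_odd_ge_three hp hodd ht hh
  have hEv : Even (1 + degW p 2 t) := by
    rw [Nat.add_comm, Nat.even_add_one]; exact hoddd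
  have hcle := core_deg_le (p := p) ht
  induction k with
  | zero => omega
  | succ k ih =>
    rcases Nat.eq_zero_or_pos k with rfl | hk1
    · have h1 : entR p (degW p 2 t) 1 = [(p-1)*(1+degW p 2 t)] := by
        simp [entR, List.range_succ]
      rw [h1]
      simp only [List.foldl_cons, List.foldl_nil]
      rw [ext_newR (p := p) (by omega) hEv (by omega), core_reconstruct ht]
    · rw [entR_succ, List.foldl_append, ih hk1]
      have harg : (p-1)*(1+degW p 2 t)*p^k
          = (p-1) * degW p 2 (Letter.rho k :: t) := by
        simp only [degW]; ring
      rw [harg]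
      simp only [List.foldl_cons, List.foldl_nil]
      rw [ext_merge_rho]

theorem fold_entF {p : ℕ} (hp : 3 ≤ p) (hodd : Odd p) {t} (ht : Adm t)
    (hh : (∃ j, t.head? = some (Letter.rho j)) ∨ (∃ j, t.head? = some (Letter.phi j)))
    (k : ℕ) :
    List.foldl (ext p) (core t) (entF p (degW p 2 t) k) = Letter.phi k :: t := by
  have hne : t.head? ≠ some sigma := by
    rcases hh with ⟨j, hj⟩ | ⟨j, hj⟩ <;> simp [hj]
  have hEvd : Even (degW p 2 t) := (deg_even hodd ht).mpr hne
  have hEvc : Even (degW p 2 (core t)) :=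
    (deg_even hodd (adm_core ht)).mpr (core_head_ne_sigma t)
  induction k with
  | zero =>
    simp only [entF, List.range_zero, List.map_nil, List.foldl_cons, List.foldl_nil]
    rw [ext_newF hp hEvd hEvc, core_reconstruct ht]
  | succ k ih =>
    rw [entF_succ, List.foldl_append, ih]
    have harg : (p-1)*(2+p*degW p 2 t)*p^k
        = (p-1) * degW p 2 (Letter.phi k :: t) := by
      simp only [degW]; ring
    rw [harg]
    simp only [List.foldl_cons, List.foldl_nil]
    rw [ext_merge_phi]

theorem encode_decode {p : ℕ} (hp : 3 ≤ p) (hodd : Odd p) {w} (h : Adm w) :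
    List.foldl (ext p) [mu] (decode p w) = core w := by
  induction h with
  | base =>
    simp only [decode, List.foldl_nil]
    exact (core_cons_of_not_pad (l := mu) rfl []).symm
  | @sig w h hh ih =>
    rw [core_cons_pad (l := sigma) (by rfl)]
    simpa only [decode] using ih
  | @rho k w h hh ih =>
    simp only [decode]
    rw [List.foldl_append, ih]
    cases k with
    | zero =>
      simp only [entR, List.range_zero, List.map_nil, List.foldl_nil]
      exact (core_cons_pad (l := Letter.rho 0) (by rfl) w).symm
    | succ k =>
      rw [fold_entR hp hodd h hh (k+1) (by omega),
        core_cons_of_not_pad (l := Letter.rho (k+1)) (by rfl)]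
  | @phi k w h hh ih =>
    simp only [decode]
    rw [List.foldl_append, ih, fold_entF hp hodd h hh k,
      core_cons_of_not_pad (l := Letter.phi k) (by rfl)]

/-! ### decode ∘ encode = id -/

def Shp (w : List Letter) : Prop :=
  Adm w ∧ (w = [mu] ∨ (∃ k t, w = Letter.rho (k+1) :: t) ∨ (∃ k t, w = Letter.phi k :: t))

theorem rep0 {M a : ℕ} (h : a % M = 0) : ∃ s, a = M * s :=
  ⟨a / M, by
    conv_lhs => rw [← Nat.div_add_mod a M, h]
    exact Nat.add_zero _⟩

theorem rep1 {M a : ℕ} (h : a % M = 1) : ∃ s, a = M * s + 1 := by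
  refine ⟨a / M, ?_⟩
  conv_lhs => rw [← Nat.div_add_mod a M, h]

theorem helper0 {P s D2 e : ℕ} (hP : 2 ≤ P) (he : e + 2 ≤ 2*P) (h : 2*P*D2 ≤ 2*P*s + e) :
    D2 ≤ s := by
  by_contra h'
  push_neg at h'
  have h2 : 2*P*(s+1) ≤ 2*P*D2 := Nat.mul_le_mul_left _ (by omega)
  nlinarith

theorem helper1 {P s : ℕ} (hP : 2 ≤ P) (h : 4*P ≤ 2*P*s + 1) : 2 ≤ s := by
  by_contra h'
  push_neg at h'
  have h2 : 2*P*s ≤ 2*P*1 := Nat.mul_le_mul_left _ (by omega)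
  nlinarith

theorem step_newR {p : ℕ} (hp : 3 ≤ p) (hodd : Odd p) {w} (hadm : Adm w)
    (hne : w.head? ≠ some sigma) {s : ℕ} (hs : degW p 2 w + 2 ≤ 2*s) :
    Shp (ext p w (2*(p-1)*s)) ∧
    decode p (ext p w (2*(p-1)*s)) = decode p w ++ [2*(p-1)*s] := by
  have hD : Even (degW p 2 w) := (deg_even hodd hadm).mpr hne
  have ha : 2*(p-1)*s = (p-1)*(1+(2*s-1)) := by
    have h1 : 1+(2*s-1) = 2*s := by omega
    rw [h1]; ring
  have hEv : Even (1+(2*s-1)) := ⟨s, by omega⟩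
  have hlt : degW p 2 w < 1 + (2*s-1) := by omega
  rw [ha, ext_newR (by omega) hEv hlt]
  set j := 2*s-1 - degW p 2 w with hj
  have hjodd : j % 2 = 1 := by
    obtain ⟨r, hr⟩ := hD
    omega
  have hhead : (pad j w).head? = some sigma := by
    rw [head_pad hne, if_neg (by omega), if_pos hjodd]
  refine ⟨⟨Adm.rho 1 (adm_pad hadm j) hhead, Or.inr (Or.inl ⟨0, pad j w, rfl⟩)⟩, ?_⟩
  simp only [decode, decode_pad, deg_pad]
  congr 1
  have hsum : degW p 2 w + j = 2*s-1 := by omega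
  rw [hsum]
  simp [entR, List.range_succ]

theorem step_newF {p : ℕ} (hp : 3 ≤ p) (hodd : Odd p) {w} (hadm : Adm w)
    (hne : w.head? ≠ some sigma) {s : ℕ} (hs : degW p 2 w ≤ 2*s)
    (hcase : degW p 2 w = 2*s →
      (∃ j, w.head? = some (Letter.rho j)) ∨ (∃ j, w.head? = some (Letter.phi j))) :
    Shp (ext p w (2*(p-1)*s+1)) ∧
    decode p (ext p w (2*(p-1)*s+1)) = decode p w ++ [2*(p-1)*s+1] := by
  have hD : Even (degW p 2 w) := (deg_even hodd hadm).mpr hne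
  have ha : 2*(p-1)*s+1 = 1+(p-1)*(2*s) := by ring
  rw [ha, ext_newF hp ⟨s, by omega⟩ hD]
  set j := 2*s - degW p 2 w with hj
  have hjev : j % 2 = 0 := by
    obtain ⟨r, hr⟩ := hD
    omega
  have hhead : (∃ i, (pad j w).head? = some (Letter.rho i)) ∨
      (∃ i, (pad j w).head? = some (Letter.phi i)) := by
    rcases Nat.eq_zero_or_pos j with hj0 | hjpos
    · rw [head_pad hne, if_pos hj0]
      exact hcase (by omega)
    · rw [head_pad hne, if_neg (by omega), if_neg (by omega)]
      exact Or.inl ⟨0, rfl⟩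
  refine ⟨⟨Adm.phi 0 (adm_pad hadm j) hhead, Or.inr (Or.inr ⟨0, pad j w, rfl⟩)⟩, ?_⟩
  simp only [decode, decode_pad, deg_pad]
  congr 1
  have hsum : degW p 2 w + j = 2*s := by omega
  rw [hsum]
  simp [entF]

theorem step {p : ℕ} (hp : 3 ≤ p) (hodd : Odd p) {w : List Letter} {a : ℕ}
    (hs : Shp w)
    (hres : a % (2*(p-1)) = 0 ∨ a % (2*(p-1)) = 1)
    (hlast : ∀ x, (decode p w).getLast? = some x → p * x ≤ a)
    (hbase : decode p w = [] → 4*(p-1) ≤ a) :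
    Shp (ext p w a) ∧ decode p (ext p w a) = decode p w ++ [a] := by
  obtain ⟨hadm, hshape⟩ := hs
  rcases hshape with rfl | ⟨k, t, rfl⟩ | ⟨k, t, rfl⟩
  · -- base case w = [mu]
    have hb : 4*(p-1) ≤ a := hbase rfl
    have hdm : degW p 2 [mu] = 2 := rfl
    have hne : ([mu] : List Letter).head? ≠ some sigma := by simp
    rcases hres with h0 | h1
    · obtain ⟨s, rfl⟩ := rep0 h0
      have hs2 : 2 ≤ s := by
        have h4 : 2*(p-1)*2 ≤ 2*(p-1)*s := by
          calc 2*(p-1)*2 = 4*(p-1) := by ring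
          _ ≤ 2*(p-1)*s := hb
        exact Nat.le_of_mul_le_mul_left h4 (by omega)
      exact step_newR hp hodd hadm hne (by rw [hdm]; omega)
    · obtain ⟨s, rfl⟩ := rep1 h1
      have hs2 : 2 ≤ s := helper1 (P := p-1) (by omega) hb
      exact step_newF hp hodd hadm hne (by rw [hdm]; omega) (by rw [hdm]; omega)
  · -- w = rho (k+1) :: t
    have hne : (Letter.rho (k+1) :: t).head? ≠ some sigma := by simp
    have hD : Even (degW p 2 (Letter.rho (k+1) :: t)) := (deg_even hodd hadm).mpr hne
    obtain ⟨D2, hD2⟩ := hD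
    have hlv : (decode p (Letter.rho (k+1) :: t)).getLast?
        = some ((p-1)*(1 + degW p 2 t)*p^k) :=
      getLast?_append_right (entR_getLast p _ k)
    have hpl : p * ((p-1)*(1 + degW p 2 t)*p^k)
        = (p-1) * degW p 2 (Letter.rho (k+1) :: t) := by
      simp only [degW]
      rw [pow_succ]
      ring
    have hlow : (p-1) * degW p 2 (Letter.rho (k+1) :: t) ≤ a := by
      rw [← hpl]
      exact hlast _ hlv
    by_cases hmerge : a = (p-1) * degW p 2 (Letter.rho (k+1) :: t)
    · rw [hmerge, ext_merge_rho]
      cases hadm with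
      | rho k' h hh =>
        refine ⟨⟨Adm.rho (k+2) h hh, Or.inr (Or.inl ⟨k+1, t, rfl⟩)⟩, ?_⟩
        have hval : (p-1) * degW p 2 (Letter.rho (k+1) :: t)
            = (p-1)*(1+degW p 2 t)*p^(k+1) := by
          simp only [degW]
          rw [pow_succ]
          ring
        simp only [decode]
        rw [entR_succ, ← List.append_assoc, hval]
    · rcases hres with h0 | h1
      · obtain ⟨s, rfl⟩ := rep0 h0
        have hDs : D2 ≤ s := by
          apply helper0 (P := p-1) (by omega) (e := 0) (by omega)
          calc 2*(p-1)*D2 = (p-1) * degW p 2 (Letter.rho (k+1) :: t) := by rw [hD2]; ring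
          _ ≤ 2*(p-1)*s + 0 := by omega
        have hDs' : D2 + 1 ≤ s := by
          rcases Nat.lt_or_ge D2 s with h | h
          · omega
          · exfalso
            apply hmerge
            have : D2 = s := by omega
            rw [hD2, ← this]; ring
        exact step_newR hp hodd hadm hne (by omega)
      · obtain ⟨s, rfl⟩ := rep1 h1
        have hDs : D2 ≤ s := by
          apply helper0 (P := p-1) (by omega) (e := p-1) (by omega)
          calc 2*(p-1)*D2 = (p-1) * degW p 2 (Letter.rho (k+1) :: t) := by rw [hD2]; ring
          _ ≤ 2*(p-1)*s + 1 := hlow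
          _ ≤ 2*(p-1)*s + (p-1) := by omega
        exact step_newF hp hodd hadm hne (by omega) (fun _ => Or.inl ⟨k+1, rfl⟩)
  · -- w = phi k :: t
    have hne : (Letter.phi k :: t).head? ≠ some sigma := by simp
    have hD : Even (degW p 2 (Letter.phi k :: t)) := (deg_even hodd hadm).mpr hne
    obtain ⟨D2, hD2⟩ := hD
    have hlow : (p-1) * degW p 2 (Letter.phi k :: t) ≤ a + (p-2) := by
      cases k with
      | zero =>
        have hlv : (decode p (Letter.phi 0 :: t)).getLast? = some (1+(p-1)*degW p 2 t) :=
          getLast?_append_right (entF_getLast0 p _)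
        have hle := hlast _ hlv
        have hpl : p * (1+(p-1)*degW p 2 t) + (p-2)
            = (p-1) * degW p 2 (Letter.phi 0 :: t) := by
          obtain ⟨q, rfl⟩ : ∃ q, p = q + 1 := ⟨p-1, by omega⟩
          simp only [degW, pow_zero, one_mul, Nat.add_sub_cancel]
          have hq : q + 1 - 2 = q - 1 := by omega
          rw [hq]
          have hq1 : 1 ≤ q := by omega
          obtain ⟨r, rfl⟩ : ∃ r, q = r + 1 := ⟨q-1, by omega⟩
          simp only [Nat.add_sub_cancel]
          ring
        omega
      | succ k =>
        have hlv : (decode p (Letter.phi (k+1) :: t)).getLast?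
            = some ((p-1)*(2+p*degW p 2 t)*p^k) :=
          getLast?_append_right (entF_getLast p _ k)
        have hle := hlast _ hlv
        have hpl : p * ((p-1)*(2+p*degW p 2 t)*p^k)
            = (p-1) * degW p 2 (Letter.phi (k+1) :: t) := by
          simp only [degW]
          rw [pow_succ]
          ring
        omega
    by_cases hmerge : a = (p-1) * degW p 2 (Letter.phi k :: t)
    · rw [hmerge, ext_merge_phi]
      cases hadm with
      | phi k' h hh =>
        refine ⟨⟨Adm.phi (k+1) h hh, Or.inr (Or.inr ⟨k+1, t, rfl⟩)⟩, ?_⟩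
        have hval : (p-1) * degW p 2 (Letter.phi k :: t)
            = (p-1)*(2+p*degW p 2 t)*p^k := by
          simp only [degW]
          ring
        simp only [decode]
        rw [entF_succ, ← List.append_assoc, hval]
    · rcases hres with h0 | h1
      · obtain ⟨s, rfl⟩ := rep0 h0
        have hDs : D2 ≤ s := by
          apply helper0 (P := p-1) (by omega) (e := p-2) (by omega)
          calc 2*(p-1)*D2 = (p-1) * degW p 2 (Letter.phi k :: t) := by rw [hD2]; ring
          _ ≤ 2*(p-1)*s + (p-2) := hlow
        have hDs' : D2 + 1 ≤ s := by
          rcases Nat.lt_or_ge D2 s with h | h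
          · omega
          · exfalso
            apply hmerge
            have : D2 = s := by omega
            rw [hD2, ← this]; ring
        exact step_newR hp hodd hadm hne (by omega)
      · obtain ⟨s, rfl⟩ := rep1 h1
        have hDs : D2 ≤ s := by
          apply helper0 (P := p-1) (by omega) (e := p-1) (by omega)
          calc 2*(p-1)*D2 = (p-1) * degW p 2 (Letter.phi k :: t) := by rw [hD2]; ring
          _ ≤ (2*(p-1)*s + 1) + (p-2) := by omega
          _ ≤ 2*(p-1)*s + (p-1) := by omega
        exact step_newF hp hodd hadm hne (by omega) (fun _ => Or.inr ⟨k, rfl⟩)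

theorem encode_fold {p : ℕ} (hp : 3 ≤ p) (hodd : Odd p) :
    ∀ (l : List ℕ) (w : List Letter), Shp w →
    (∀ i ∈ l, i % (2*(p-1)) = 0 ∨ i % (2*(p-1)) = 1) →
    ((decode p w ++ l).Chain' (fun x y => p * x ≤ y)) →
    (∀ x, (decode p w ++ l).head? = some x → 4*(p-1) ≤ x) →
    Shp (l.foldl (ext p) w) ∧ decode p (l.foldl (ext p) w) = decode p w ++ l := by
  intro l
  induction l with
  | nil =>
    intro w hs _ _ _
    rw [List.foldl_nil, List.append_nil]
    exact ⟨hs, rfl⟩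
  | cons a l ih =>
    intro w hs hres hchain hhead
    have hres_a := hres a List.mem_cons_self
    have hju : ∀ x, (decode p w).getLast? = some x → p * x ≤ a := by
      intro x hx
      exact (List.isChain_append.mp hchain).2.2 x (by rw [hx]; rfl) a rfl
    have hb : decode p w = [] → 4*(p-1) ≤ a := by
      intro h0
      exact hhead a (by rw [h0]; rfl)
    obtain ⟨hs', hdec⟩ := step hp hodd hs hres_a hju hb
    have hrw : decode p (ext p w a) ++ l = decode p w ++ (a :: l) := by
      rw [hdec, List.append_assoc]
      rfl
    have key := ih (ext p w a) hs' (fun i hi => hres i (List.mem_cons_of_mem _ hi))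
      (by rw [hrw]; exact hchain) (by rw [hrw]; exact hhead)
    rw [List.foldl_cons]
    refine ⟨key.1, ?_⟩
    rw [key.2, hrw]

theorem shp_not_pad {w} (hs : Shp w) : ∀ x ∈ w.head?, padB x = false := by
  obtain ⟨-, rfl | ⟨k, t, rfl⟩ | ⟨k, t, rfl⟩⟩ := hs <;> simp [padB]

theorem shp_ne_sigma {w} (hs : Shp w) : w.head? ≠ some sigma := by
  obtain ⟨-, rfl | ⟨k, t, rfl⟩ | ⟨k, t, rfl⟩⟩ := hs <;> simp

theorem pad_stable {w} (hne : w.head? ≠ some sigma) {j : ℕ} (hj : 1 ≤ j) :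
    IsStable (pad j w) := by
  unfold IsStable
  rw [head_pad hne, if_neg (by omega)]
  by_cases hp2 : j % 2 = 1
  · rw [if_pos hp2]
    exact Or.inr (Or.inl rfl)
  · rw [if_neg hp2]
    exact Or.inr (Or.inr (Or.inl rfl))

end St2

open St2

theorem statement2 (p m : ℕ) (hp : p.Prime) (hpodd : Odd p) (hm : 1 ≤ m) :
    ∃ N : ℕ, ∀ n, N ≤ n →
      Nat.card {w : List Letter //
          IsAdmissible w ∧ IsStable w ∧ w.length = n ∧ degW p 2 w = n + m} =
      Nat.card {a : List ℕ //
          (∀ i ∈ a, 0 < i) ∧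
          (∀ i ∈ a, i % (2 * p - 2) = 0 ∨ i % (2 * p - 2) = 1) ∧
          (∀ h, a.head? = some h → 4 * (p - 1) ≤ h) ∧
          a.Chain' (fun x y => p * x ≤ y) ∧
          1 + a.sum = m} := by
  have h3 : 3 ≤ p := by
    obtain ⟨t, ht⟩ := hpodd
    have := hp.two_le
    omega
  have hmod : 2*p - 2 = 2*(p-1) := by omega
  refine ⟨m+1, fun n hn => ?_⟩
  -- facts about the inverse construction
  have hinv : ∀ a : List ℕ,
      (∀ i ∈ a, 0 < i) →
      (∀ i ∈ a, i % (2 * p - 2) = 0 ∨ i % (2 * p - 2) = 1) →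
      (∀ h, a.head? = some h → 4 * (p - 1) ≤ h) →
      a.Chain' (fun x y => p * x ≤ y) →
      1 + a.sum = m →
      Shp (encode p a) ∧ decode p (encode p a) = a ∧ (encode p a).length ≤ m := by
    intro a ha1 ha2 ha3 ha4 ha5
    have hd0 : decode p [mu] = [] := rfl
    have hfold := encode_fold h3 hpodd a [mu] ⟨Adm.base, Or.inl rfl⟩
      (by intro i hi; rw [← hmod]; exact ha2 i hi)
      (by rw [hd0, List.nil_append]; exact ha4)
      (by rw [hd0, List.nil_append]; intro x hx; exact ha3 x hx)
    have hShp : Shp (encode p a) := hfold.1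
    have hdec : decode p (encode p a) = decode p [mu] ++ a := hfold.2
    rw [hd0, List.nil_append] at hdec
    refine ⟨hShp, hdec, ?_⟩
    have hsumc := decode_sum (p := p) (by omega) hShp.1
    rw [hdec] at hsumc
    have hlen := core_len_bound h3 hShp.1 (shp_not_pad hShp)
    rw [hdec] at hlen
    omega
  apply Nat.card_congr
  exact {
    toFun := fun x => ⟨decode p x.1, by
      have hA : Adm x.1 := isAdmissible_to_adm _ x.2.1
      have hsum := decode_sum (p := p) (by omega) hA
      have hw3 := x.2.2.2.1
      have hw4 := x.2.2.2.2
      refine ⟨decode_pos (by omega) hA, ?_, decode_head h3 hpodd hA,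
        decode_chain h3 hpodd hA, by omega⟩
      intro i hi
      rw [hmod]
      exact decode_res h3 hpodd hA i hi⟩,
    invFun := fun y => ⟨pad (n - (encode p y.1).length) (encode p y.1), by
      obtain ⟨hShp, hdec, hlen⟩ :=
        hinv y.1 y.2.1 y.2.2.1 y.2.2.2.1 y.2.2.2.2.1 y.2.2.2.2.2
      have hAc : Adm (encode p y.1) := hShp.1
      have hsumc := decode_sum (p := p) (by omega) hAc
      rw [hdec] at hsumc
      have hle : (encode p y.1).length ≤ n := by omega
      have hj : 1 ≤ n - (encode p y.1).length := by omega
      refine ⟨adm_to_isAdmissible (adm_pad hAc _), pad_stable (shp_ne_sigma hShp) hj, ?_, ?_⟩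
      · rw [len_pad]; omega
      · rw [deg_pad]; omega⟩,
    left_inv := by
      rintro ⟨w, hw1, hw2, hw3, hw4⟩
      apply Subtype.ext
      show pad (n - (encode p (decode p w)).length) (encode p (decode p w)) = w
      have hA : Adm w := isAdmissible_to_adm w hw1
      have hed : encode p (decode p w) = core w := encode_decode h3 hpodd hA
      rw [hed]
      have hpc := pad_core hA
      rw [hw3] at hpc
      exact hpc,
    right_inv := by
      rintro ⟨a, ha1, ha2, ha3, ha4, ha5⟩
      apply Subtype.ext
      show decode p (pad (n - (encode p a).length) (encode p a)) = a
      obtain ⟨-, hdec, -⟩ := hinv a ha1 ha2 ha3 ha4 ha5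
      rw [decode_pad]
      exact hdec }
end

section
/- Let p be an odd prime and n ≥ 1. Every admissible word of length n has degree at least n + 1, with equality if and only if every letter of the word other than the final μ is either σ or ρ^0. Consequently, for each n ≥ 1 there is exactly one admissible word of length n and degree n + 1, and it is stable. -/
open Letter

def can : ℕ → List Letter
  | 0 => []
  | 1 => [mu]
  | n+2 => (if n % 2 = 0 then sigma else rho 0) :: can (n+1)

lemma can_length : ∀ n, (can n).length = n
  | 0 => rfl
  | 1 => rfl
  | n+2 => by simp [can, can_length (n+1)]

lemma can_ne (n : ℕ) (h : 1 ≤ n) : can n ≠ [] := by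
  intro he
  have := can_length n
  rw [he] at this
  simp at this
  omega

lemma can_last : ∀ n, 1 ≤ n → (can n).getLast? = some mu
  | 1, _ => rfl
  | n+2, _ => by
      rcases List.exists_cons_of_ne_nil (can_ne (n+1) (by omega)) with ⟨b, t, hbt⟩
      show ((if n % 2 = 0 then sigma else rho 0) :: can (n+1)).getLast? = some mu
      rw [hbt, List.getLast?_cons_cons, ← hbt]
      exact can_last (n+1) (by omega)

lemma can_head (n : ℕ) : (can (n+2)).head? = some (if n % 2 = 0 then sigma else rho 0) := rfl

lemma can_chain : ∀ n, (can n).Chain' allowedPair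
  | 0 => List.isChain_nil
  | 1 => List.isChain_singleton _
  | 2 => by
      show List.Chain' allowedPair [sigma, mu]
      simp [allowedPair, List.Chain']
  | n+3 => by
      have ih := can_chain (n+2)
      show List.Chain' allowedPair
        ((if (n+1) % 2 = 0 then sigma else rho 0) ::
          (if n % 2 = 0 then sigma else rho 0) :: can (n+1))
      unfold List.Chain'
      rw [List.isChain_cons_cons]
      refine ⟨?_, ih⟩
      rcases Nat.mod_two_eq_zero_or_one n with hm | hm
      · have : (n+1) % 2 = 1 := by omega
        simp [hm, this, allowedPair]
      · have : (n+1) % 2 = 0 := by omega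
        simp [hm, this, allowedPair]

lemma can_mem : ∀ n, ∀ l ∈ can n, l = sigma ∨ l = rho 0 ∨ l = mu
  | 0, l, hl => by simp [can] at hl
  | 1, l, hl => by
      simp [can] at hl; subst hl; tauto
  | n+2, l, hl => by
      rcases List.mem_cons.mp hl with h | h
      · subst h
        rcases Nat.mod_two_eq_zero_or_one n with hm | hm <;> simp [hm] <;> tauto
      · exact can_mem (n+1) l h

lemma can_adm (n : ℕ) (h : 1 ≤ n) : IsAdmissible (can n) :=
  ⟨can_ne n h, can_last n h, can_chain n⟩

lemma tail_adm {a b : Letter} {t : List Letter} (h : IsAdmissible (a :: b :: t)) :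
    IsAdmissible (b :: t) ∧ allowedPair a b := by
  obtain ⟨-, hlast, hchain⟩ := h
  rw [List.getLast?_cons_cons] at hlast
  unfold List.Chain' at hchain
  rw [List.isChain_cons_cons] at hchain
  exact ⟨⟨by simp, hlast, hchain.2⟩, hchain.1⟩

lemma main (p : ℕ) (hp : 3 ≤ p) : ∀ w : List Letter, IsAdmissible w →
    w.length + 1 ≤ degW p 2 w ∧
      (degW p 2 w = w.length + 1 ↔ ∀ l ∈ w, l = sigma ∨ l = rho 0 ∨ l = mu)
  | [], h => absurd rfl h.1
  | [a], h => by
      have ha : a = mu := by simpa using h.2.1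
      subst ha
      simp [degW]
  | a :: b :: t, h => by
      obtain ⟨htail, hab⟩ := tail_adm h
      obtain ⟨ih1, ih2⟩ := main p hp (b :: t) htail
      cases a with
      | mu =>
          exfalso
          cases b <;> simp [allowedPair] at hab
      | sigma =>
          simp only [degW, List.length_cons, List.forall_mem_cons] at *
          constructor
          · omega
          · constructor
            · intro h'
              exact ⟨by simp, ih2.mp (by omega)⟩
            · rintro ⟨-, h2⟩
              have := ih2.mpr h2
              omega
      | rho k =>
          rcases Nat.eq_zero_or_pos k with hk | hk
          · subst hk
            simp only [degW, pow_zero, one_mul, List.length_cons, List.forall_mem_cons] at *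
            constructor
            · omega
            · constructor
              · intro h'
                exact ⟨by simp, ih2.mp (by omega)⟩
              · rintro ⟨-, h2⟩
                have := ih2.mpr h2
                omega
          · have hpk : p ≤ p ^ k := by
              calc p = p ^ 1 := (pow_one p).symm
                _ ≤ p ^ k := Nat.pow_le_pow_right (by omega) hk
            have hbig : 3 * (1 + degW p 2 (b :: t)) ≤ p ^ k * (1 + degW p 2 (b :: t)) :=
              Nat.mul_le_mul_right _ (by omega)
            simp only [degW, List.length_cons, List.forall_mem_cons] at *
            constructor
            · omega
            · constructor
              · intro h'
                rw [h'] at hbig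
                omega
              · rintro ⟨h1, -⟩
                rcases h1 with h | h | h <;> simp_all <;> omega
      | phi k =>
          have h1 : 2 + 3 * degW p 2 (b :: t) ≤ 2 + p * degW p 2 (b :: t) :=
            Nat.add_le_add_left (Nat.mul_le_mul_right _ (by omega)) 2
          have h2 : 2 + p * degW p 2 (b :: t) ≤ p ^ k * (2 + p * degW p 2 (b :: t)) :=
            Nat.le_mul_of_pos_left _ (pow_pos (by omega) k)
          simp only [degW, List.length_cons, List.forall_mem_cons] at *
          constructor
          · omega
          · constructor
            · intro h'
              rw [h'] at h2
              omega
            · rintro ⟨h1', -⟩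
              rcases h1' with h | h | h <;> exact Letter.noConfusion h

lemma uniq : ∀ w : List Letter, IsAdmissible w →
    (∀ l ∈ w, l = sigma ∨ l = rho 0 ∨ l = mu) → w = can w.length
  | [], h, _ => absurd rfl h.1
  | [a], h, _ => by
      have ha : a = mu := by simpa using h.2.1
      subst ha
      rfl
  | a :: b :: t, h, hmem => by
      obtain ⟨htail, hab⟩ := tail_adm h
      have ih := uniq (b :: t) htail (fun l hl => hmem l (List.mem_cons_of_mem _ hl))
      have hma : a = sigma ∨ a = rho 0 ∨ a = mu := hmem a (by simp)
      cases t with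
      | nil =>
          have hb : b = mu := by
            have : [b] = [mu] := ih
            simpa using this
          subst hb
          have ha : a = sigma := hab
          subst ha
          rfl
      | cons c t' =>
          have hlen : (b :: c :: t').length = t'.length + 2 := by simp
          rw [hlen] at ih
          have hb : b = (if t'.length % 2 = 0 then sigma else rho 0) := by
            have := ih
            rw [show can (t'.length + 2) =
              (if t'.length % 2 = 0 then sigma else rho 0) :: can (t'.length + 1) from rfl] at this
            exact (List.cons_eq_cons.mp this).1
          show a :: b :: c :: t' = can (t'.length + 3)
          have hcan3 : can (t'.length + 3) =
              (if (t'.length + 1) % 2 = 0 then sigma else rho 0) :: can (t'.length + 2) := rfl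
          rcases Nat.mod_two_eq_zero_or_one t'.length with hm | hm
          · -- b = sigma, so a = rho k, and a ∈ set forces a = rho 0
            rw [hm, if_pos rfl] at hb
            subst hb
            obtain ⟨j, hj⟩ : ∃ j, a = rho j := hab
            have ha : a = rho 0 := by
              rcases hma with h' | h' | h' <;> simp_all
            subst ha
            rw [hcan3, if_neg (by omega), ← ih]
          · rw [hm, if_neg (by omega)] at hb
            subst hb
            have ha : a = sigma := by
              rcases hab with h' | ⟨j, hj⟩
              · exact h'
              · rcases hma with h' | h' | h' <;> simp_all
            subst ha
            rw [hcan3, if_pos (by omega), ← ih]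

theorem statement4 (p n : ℕ) (hp : p.Prime) (hpodd : Odd p) (hn : 1 ≤ n) :
    (∀ w : List Letter, IsAdmissible w → w.length = n →
      n + 1 ≤ degW p 2 w ∧
      (degW p 2 w = n + 1 ↔
        ∀ l ∈ w, l = Letter.sigma ∨ l = Letter.rho 0 ∨ l = Letter.mu)) ∧
    (∃! w : List Letter, IsAdmissible w ∧ w.length = n ∧ degW p 2 w = n + 1) ∧
    (∀ w : List Letter, IsAdmissible w → w.length = n → degW p 2 w = n + 1 →
      IsStable w) := by
  have hp3 : 3 ≤ p := by
    have h2 := hp.two_le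
    have hne : p ≠ 2 := by
      rintro rfl
      rw [Nat.odd_iff] at hpodd
      omega
    omega
  refine ⟨?_, ?_, ?_⟩
  · intro w hw hlen
    subst hlen
    exact main p hp3 w hw
  · refine ⟨can n, ⟨can_adm n hn, can_length n, ?_⟩, ?_⟩
    · have := (main p hp3 (can n) (can_adm n hn)).2.mpr (can_mem n)
      rwa [can_length] at this
    · rintro y ⟨hy, hylen, hydeg⟩
      have hmemy : ∀ l ∈ y, l = sigma ∨ l = rho 0 ∨ l = mu :=
        (main p hp3 y hy).2.mp (by rw [hylen]; exact hydeg)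
      have := uniq y hy hmemy
      rwa [hylen] at this
  · intro w hw hlen hdeg
    have hmemw : ∀ l ∈ w, l = sigma ∨ l = rho 0 ∨ l = mu :=
      (main p hp3 w hw).2.mp (by rw [hlen]; exact hdeg)
    rcases List.exists_cons_of_ne_nil hw.1 with ⟨a, t, rfl⟩
    have ha := hmemw a (by simp)
    rcases ha with h | h | h <;> subst h <;> simp [IsStable]
end

section
/- Let p be an odd prime and m an integer. The map sending a sequence (a_1, ..., a_k) to (1 − a_k, 1 − a_{k−1}, ..., 1 − a_1) is a bijection from the set of sequences of positive integers (k ≥ 0, the empty sequence allowed) satisfying: each a_i ≡ 0 or 1 modulo 2(p−1), a_1 ≥ 4(p−1), a_{i+1} ≥ p·a_i for 1 ≤ i ≤ k−1, and 1 + a_1 + ... + a_k = m; onto the set of sequences of integers (i_1, ..., i_k) (k ≥ 0) satisfying: each i_j ≡ 0 or 1 modulo 2(p−1), i_j < p·i_{j+1} for 1 ≤ j ≤ k−1, i_k ≤ −3(p−1) when k ≥ 1, and −3 + (i_1 + ... + i_k) − k = −2 − m. -/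
private lemma fsimp : (fun a : List ℕ => (a.map (fun x => 1 - (x : ℤ))).reverse)
      = fun a : List ℕ => (List.map (fun x : ℕ => 1 - (x:ℤ)) a).reverse := by
  funext a
  congr 1
  induction a with
  | nil => rfl
  | cons x t ih =>
    simp only [List.flatMap_cons, List.map_cons, List.map_append]
    rw [← ih]
    rfl

private lemma chain'_imp_mem {α : Type*} {P : α → Prop} {R S : α → α → Prop}
    (H : ∀ x y, P x → P y → R x y → S x y) :
    ∀ l : List α, (∀ i ∈ l, P i) → l.Chain' R → l.Chain' S
  | [] , _, _ => List.isChain_nil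
  | [x], _, _ => List.isChain_singleton x
  | x :: y :: t, hm, hc => by
    rw [List.Chain', List.isChain_cons_cons] at hc ⊢
    exact ⟨H x y (hm x (by simp)) (hm y (by simp)) hc.1,
      chain'_imp_mem H (y :: t) (fun i hi => hm i (List.mem_cons_of_mem _ hi)) hc.2⟩

private lemma mod_one_sub {n x : ℤ} (hn : 2 ≤ n) (hx : x % n = 0 ∨ x % n = 1) :
    (1 - x) % n = 0 ∨ (1 - x) % n = 1 := by
  have h1 : (1:ℤ) % n = 1 := Int.emod_eq_of_lt (by norm_num) (by omega)
  rcases hx with hx | hx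
  · right; rw [Int.sub_emod, hx, sub_zero, h1, h1]
  · left; rw [Int.sub_emod, hx, h1]; simp

private lemma keyA (p : ℤ) (hp : 3 ≤ p) {x y : ℤ}
    (hx : x % (2*(p-1)) = 0 ∨ x % (2*(p-1)) = 1)
    (hy : y % (2*(p-1)) = 0 ∨ y % (2*(p-1)) = 1)
    (hlt : x < p * y) : x ≤ p * y - (p - 1) := by
  set n := 2*(p-1) with hn
  have hpn : p % n = p := Int.emod_eq_of_lt (by omega) (by omega)
  have hpy : (p*y) % n = 0 ∨ (p*y) % n = p := by
    rcases hy with hy | hy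
    · left; rw [Int.mul_emod, hy, mul_zero, Int.zero_emod]
    · right; rw [Int.mul_emod, hy, mul_one, hpn]; exact hpn
  by_contra hcon
  push_neg at hcon
  set d := p * y - x with hd
  have hd1 : 1 ≤ d := by omega
  have hd2 : d ≤ p - 2 := by omega
  have hdd : d % n = d := Int.emod_eq_of_lt (by omega) (by omega)
  have hm1 : (-1 : ℤ) % n = n - 1 := by
    rw [show (-1:ℤ) = (n-1) + n * (-1) by ring, Int.add_mul_emod_self_left]
    exact Int.emod_eq_of_lt (by omega) (by omega)
  have hp1 : (p - 1 : ℤ) % n = p - 1 := Int.emod_eq_of_lt (by omega) (by omega)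
  have hdm : d % n = 0 ∨ d % n = n - 1 ∨ d % n = p ∨ d % n = p - 1 := by
    rw [hd, Int.sub_emod]
    rcases hpy with h2 | h2 <;> rcases hx with h3 | h3 <;> rw [h2, h3]
    · left; simp
    · right; left; rw [show (0:ℤ) - 1 = -1 by ring, hm1]
    · right; right; left; rw [sub_zero, hpn]
    · right; right; right; exact hp1
  have hdisj : d = 0 ∨ d = n - 1 ∨ d = p ∨ d = p - 1 := by rw [← hdd]; exact hdm
  rcases hdisj with h | h | h | h <;> omega

private lemma keyB (p h : ℤ) (hp : 3 ≤ p)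
    (hmod : h % (2*(p-1)) = 0 ∨ h % (2*(p-1)) = 1)
    (hge : 3*(p-1) + 1 ≤ h) : 4*(p-1) ≤ h := by
  set n := 2*(p-1) with hn
  by_contra hc
  push_neg at hc
  have h1 : h % n = h - n := by
    conv_lhs => rw [show h = (h - n) + n * 1 by ring]
    rw [Int.add_mul_emod_self_left]
    exact Int.emod_eq_of_lt (by omega) (by omega)
  have h2 : h - n = 0 ∨ h - n = 1 := by rw [← h1]; exact hmod
  omega

private lemma allNeg (p : ℤ) (hp : 3 ≤ p) :
    ∀ l : List ℤ, l.Chain' (fun x y => x < p * y) →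
    (∀ j, l.getLast? = some j → j ≤ -3 * (p - 1)) → ∀ x ∈ l, x ≤ -1
  | [] => by simp
  | [a] => by
    intro _ hl x hx
    simp only [List.mem_singleton] at hx
    subst hx
    have := hl x (by simp)
    omega
  | a :: b :: t => by
    intro hc hl x hx
    rw [List.Chain', List.isChain_cons_cons] at hc
    have hlast : ∀ j, (b :: t).getLast? = some j → j ≤ -3 * (p-1) := by
      intro j hj
      exact hl j (by rw [List.getLast?_cons_cons]; exact hj)
    have ih := allNeg p hp (b :: t) hc.2 hlast
    rw [List.mem_cons] at hx
    rcases hx with rfl | hx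
    · have hb := ih b (by simp)
      have h2 : p * b ≤ p * (-1) := mul_le_mul_of_nonneg_left hb (by omega)
      have := hc.1
      nlinarith
    · exact ih x hx

private lemma sum_map_one_sub : ∀ a : List ℕ,
    (List.map (fun x : ℕ => 1 - (x:ℤ)) a).sum = a.length - a.sum
  | [] => by simp
  | x :: t => by
    rw [List.map_cons, List.sum_cons, sum_map_one_sub t, List.length_cons, List.sum_cons]
    push_cast; ring

private lemma mem_of_getLast?' {l : List ℤ} {j : ℤ} (h : l.getLast? = some j) : j ∈ l := by
  have h2 : j ∈ l.reverse.head? := by rw [List.head?_reverse, h]; rfl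
  simpa using List.mem_of_mem_head? h2

theorem statement11 (p : ℕ) (m : ℤ) (hp : p.Prime) (hpodd : Odd p) :
    Set.BijOn (fun a : List ℕ => (a.map (fun x => 1 - (x : ℤ))).reverse)
      {a : List ℕ |
        (∀ i ∈ a, 0 < i) ∧
        (∀ i ∈ a, i % (2 * (p - 1)) = 0 ∨ i % (2 * (p - 1)) = 1) ∧
        (∀ h, a.head? = some h → 4 * (p - 1) ≤ h) ∧
        a.Chain' (fun x y => p * x ≤ y) ∧
        1 + (a.sum : ℤ) = m}
      {l : List ℤ |
        (∀ i ∈ l, i % (2 * ((p : ℤ) - 1)) = 0 ∨ i % (2 * ((p : ℤ) - 1)) = 1) ∧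
        l.Chain' (fun x y => x < (p : ℤ) * y) ∧
        (∀ j, l.getLast? = some j → j ≤ -3 * ((p : ℤ) - 1)) ∧
        -3 + l.sum - l.length = -2 - m} := by
  rw [fsimp]
  have hp3 : 3 ≤ p := by
    have h2 := hp.two_le
    rcases Nat.lt_or_ge p 3 with h | h
    · interval_cases p
      · exact absurd hpodd (by decide)
    · exact h
  have hp1 : 1 ≤ p := by omega
  have hpz : (3:ℤ) ≤ (p:ℤ) := by exact_mod_cast hp3
  have hcast : ((2*(p-1):ℕ):ℤ) = 2*((p:ℤ)-1) := by
    rw [Nat.cast_mul, Nat.cast_sub hp1]; norm_num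
  have hN2 : (2:ℤ) ≤ 2*((p:ℤ)-1) := by omega
  -- transfer nat mod conditions to int
  have hbase : ∀ u : ℕ, ((u % (2*(p-1)) : ℕ) : ℤ) = (u:ℤ) % (2*((p:ℤ)-1)) := by
    intro u
    push_cast [Nat.cast_sub hp1]
    ring
  have hmodcast : ∀ x : ℕ, (x % (2*(p-1)) = 0 ∨ x % (2*(p-1)) = 1) →
      ((x:ℤ) % (2*((p:ℤ)-1)) = 0 ∨ (x:ℤ) % (2*((p:ℤ)-1)) = 1) := by
    intro x hx
    rcases hx with hx | hx
    · left; rw [← hbase x, hx]; rfl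
    · right; rw [← hbase x, hx]; rfl
  refine ⟨?_, ?_, ?_⟩
  · -- MapsTo
    intro a ha
    obtain ⟨hpos, hmod, hhead, hchain, hsum⟩ := ha
    refine ⟨?_, ?_, ?_, ?_⟩
    · intro i hi
      rw [List.mem_reverse, List.mem_map] at hi
      obtain ⟨x, hx, rfl⟩ := hi
      exact mod_one_sub hN2 (hmodcast x (hmod x hx))
    · rw [List.Chain', List.isChain_reverse, List.isChain_map]
      refine hchain.imp ?_
      intro x y hxy
      have hc : (p:ℤ) * (x:ℤ) ≤ (y:ℤ) := by exact_mod_cast hxy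
      show (1 : ℤ) - y < (p:ℤ) * (1 - x)
      nlinarith
    · intro j hj
      rw [List.getLast?_reverse, List.head?_map] at hj
      cases hhd : a.head? with
      | none => rw [hhd] at hj; simp at hj
      | some h =>
        rw [hhd, Option.map_some] at hj
        injection hj with hj
        have h4 := hhead h hhd
        have h4z : ((4*(p-1):ℕ):ℤ) ≤ (h:ℤ) := Nat.cast_le.mpr h4
        rw [Nat.cast_mul, Nat.cast_sub hp1] at h4z
        push_cast at h4z
        omega
    · rw [List.sum_reverse, List.length_reverse, List.length_map, sum_map_one_sub]
      omega
  · -- InjOn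
    intro a _ b _ h
    have h2 := List.reverse_injective h
    have hinj : Function.Injective (fun x : ℕ => 1 - (x:ℤ)) := by
      intro u v huv
      simp only at huv
      omega
    exact List.map_injective_iff.mpr hinj h2
  · -- SurjOn
    intro l hl
    obtain ⟨hmod, hchain, hlast, hsum⟩ := hl
    have hneg : ∀ x ∈ l, x ≤ -1 := allNeg (p:ℤ) hpz l hchain hlast
    have htn : ∀ x ∈ l, (((1 - x).toNat : ℤ)) = 1 - x := by
      intro x hx
      exact Int.toNat_of_nonneg (by have := hneg x hx; omega)
    refine ⟨l.reverse.map (fun x => (1 - x).toNat), ⟨?_, ?_, ?_, ?_, ?_⟩, ?_⟩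
    · intro i hi
      rw [List.mem_map] at hi
      obtain ⟨x, hx, rfl⟩ := hi
      rw [List.mem_reverse] at hx
      have := hneg x hx
      omega
    · intro i hi
      rw [List.mem_map] at hi
      obtain ⟨x, hx, rfl⟩ := hi
      rw [List.mem_reverse] at hx
      have hz := mod_one_sub hN2 (hmod x hx)
      have ht := htn x hx
      have hc : (((1 - x).toNat % (2*(p-1)) : ℕ) : ℤ) = (1 - x) % (2*((p:ℤ)-1)) := by
        rw [hbase, ht]
      rcases hz with hz | hz
      · left; exact_mod_cast hc.trans hz
      · right; exact_mod_cast hc.trans hz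
    · intro h hh
      rw [List.head?_map, List.head?_reverse] at hh
      cases hg : l.getLast? with
      | none => rw [hg] at hh; simp at hh
      | some j =>
        rw [hg, Option.map_some] at hh
        injection hh with hh
        have hj1 := hlast j hg
        have hjmem : j ∈ l := mem_of_getLast?' hg
        have ht := htn j hjmem
        have hhz : (h:ℤ) = 1 - j := by rw [← hh, ht]
        have hmodh : (h:ℤ) % (2*((p:ℤ)-1)) = 0 ∨ (h:ℤ) % (2*((p:ℤ)-1)) = 1 := by
          rw [hhz]; exact mod_one_sub hN2 (hmod j hjmem)
        have hk := keyB (p:ℤ) (h:ℤ) hpz hmodh (by omega)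
        omega
    · rw [List.Chain', List.isChain_map, List.isChain_reverse]
      refine chain'_imp_mem (P := fun i : ℤ =>
          (i % (2*((p:ℤ)-1)) = 0 ∨ i % (2*((p:ℤ)-1)) = 1) ∧ i ≤ -1) ?_ l ?_ hchain
      · intro x y hPx hPy hxy
        have h1 : ((1-x).toNat : ℤ) = 1 - x := Int.toNat_of_nonneg (by omega)
        have h2 : ((1-y).toNat : ℤ) = 1 - y := Int.toNat_of_nonneg (by omega)
        have hk := keyA (p:ℤ) hpz hPx.1 hPy.1 hxy
        show (p:ℕ) * (1-y).toNat ≤ (1-x).toNat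
        have hz : (p:ℤ) * ((1-y).toNat : ℤ) ≤ ((1-x).toNat : ℤ) := by
          rw [h1, h2]; nlinarith
        exact_mod_cast hz
      · intro i hi
        exact ⟨hmod i hi, hneg i hi⟩
    · have hsl : (Nat.cast ((l.reverse.map (fun x => (1 - x).toNat)).sum) : ℤ) = l.length - l.sum := by
        rw [Nat.cast_list_sum, List.map_map]
        have : l.reverse.map ((fun x : ℕ => (x:ℤ)) ∘ (fun x => (1 - x).toNat))
            = l.reverse.map (fun x => 1 - x) := by
          refine List.map_congr_left ?_
          intro x hx
          rw [List.mem_reverse] at hx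
          exact htn x hx
        rw [this]
        have hss : ∀ L : List ℤ, (L.map (fun x => 1 - x)).sum = L.length - L.sum := by
          intro L
          induction L with
          | nil => simp
          | cons x t ih => rw [List.map_cons, List.sum_cons, ih, List.length_cons,
              List.sum_cons]; push_cast; ring
        rw [hss, List.length_reverse, List.sum_reverse]
      rw [hsl]
      omega
    · show (List.map (fun x : ℕ => 1 - (x:ℤ)) (l.reverse.map fun x => (1 - x).toNat)).reverse = l
      rw [List.map_map]
      have : l.reverse.map ((fun x : ℕ => 1 - (x:ℤ)) ∘ (fun x => (1 - x).toNat))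
          = l.reverse.map id := by
        refine List.map_congr_left ?_
        intro x hx
        rw [List.mem_reverse] at hx
        have := htn x hx
        simp only [Function.comp_apply, id_eq]
        omega
      rw [this, List.map_id, List.reverse_reverse]
end
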